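/- arXiv:1311.2285 — 5 statements merged into one kernel-verified Lean document; each statement's English description precedes it below -/
import Mathlib

section
/- Let D be an ultrafilter on a set I and let X be a GO space. Then X is D-compact if and only if X has no gap and no pseudo-gap whose type is an infinite regular cardinal ν such that D is ν-decomposable. -/
universe u v

open Set Cardinal Filter Topology TopologicalSpace

section Defs

variable {X : Type u} [LinearOrder X]

/-- A subset `Y` of a linear order `X`, having no maximum, is `lam`-full in `X` on the right
if for every `y ∈ Y` the set `⋃ y' ∈ Y, (y, y')` (intervals computed in `X`)
has cardinality at least `lam`. -/
def FullRight (lam : Cardinal.{u}) (Y : Set X) : Prop :=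
  (¬ ∃ m ∈ Y, ∀ y ∈ Y, y ≤ m) ∧
    ∀ y ∈ Y, lam ≤ #(⋃ y' ∈ Y, Ioo y y')

/-- A subset `Y` of a linear order `X`, having no minimum, is `lam`-full in `X` on the left
if for every `y ∈ Y` the set `⋃ y' ∈ Y, (y', y)` (intervals computed in `X`)
has cardinality at least `lam`. -/
def FullLeft (lam : Cardinal.{u}) (Y : Set X) : Prop :=
  (¬ ∃ m ∈ Y, ∀ y ∈ Y, m ≤ y) ∧
    ∀ y ∈ Y, lam ≤ #(⋃ y' ∈ Y, Ioo y' y)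

/-- The pair `(A, B)` is a gap of the space `X`: `A`, `B` are open, `A ∪ B = X`,
every element of `A` is less than every element of `B`, `A` has no maximum and `B` has
no minimum (`A` or `B` may be empty). -/
def IsGap [TopologicalSpace X] (A B : Set X) : Prop :=
  IsOpen A ∧ IsOpen B ∧ A ∪ B = Set.univ ∧ (∀ a ∈ A, ∀ b ∈ B, a < b) ∧
    (¬ ∃ m ∈ A, ∀ a ∈ A, a ≤ m) ∧ (¬ ∃ m ∈ B, ∀ b ∈ B, m ≤ b)

/-- The pair `(A, B)` is a pseudo-gap of the space `X`: `A`, `B` are open and nonempty,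
`A ∪ B = X`, every element of `A` is less than every element of `B`, and either `A` has a
maximum and `B` has no minimum, or `A` has no maximum and `B` has a minimum. -/
def IsPseudoGap [TopologicalSpace X] (A B : Set X) : Prop :=
  IsOpen A ∧ IsOpen B ∧ A ∪ B = Set.univ ∧ (∀ a ∈ A, ∀ b ∈ B, a < b) ∧
    A.Nonempty ∧ B.Nonempty ∧
    (((∃ m ∈ A, ∀ a ∈ A, a ≤ m) ∧ ¬ ∃ m ∈ B, ∀ b ∈ B, m ≤ b) ∨
      ((¬ ∃ m ∈ A, ∀ a ∈ A, a ≤ m) ∧ ∃ m ∈ B, ∀ b ∈ B, m ≤ b))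

/-- The cofinality of `A`: the least cardinality of a subset of `A` cofinal in `A`. -/
noncomputable def cofinCard (A : Set X) : Cardinal.{u} :=
  sInf {c | ∃ S : Set X, S ⊆ A ∧ (∀ a ∈ A, ∃ s ∈ S, a ≤ s) ∧ c = #S}

/-- The coinitiality of `B`: the least cardinality of a subset of `B` coinitial in `B`. -/
noncomputable def coinitCard (B : Set X) : Cardinal.{u} :=
  sInf {c | ∃ S : Set X, S ⊆ B ∧ (∀ b ∈ B, ∃ s ∈ S, s ≤ b) ∧ c = #S}

/-- `mu` is a type of the gap `(A, B)`: `mu` is the cofinality of `A` or the coinitiality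
of `B`. -/
def IsGapType (mu : Cardinal.{u}) (A B : Set X) : Prop :=
  mu = cofinCard A ∨ mu = coinitCard B

/-- `mu` is the type of the pseudo-gap `(A, B)`: the cofinality of `A` if `B` has a minimum,
the coinitiality of `B` if `A` has a maximum. -/
def IsPseudoGapType (mu : Cardinal.{u}) (A B : Set X) : Prop :=
  ((∃ m ∈ B, ∀ b ∈ B, m ≤ b) ∧ mu = cofinCard A) ∨
    ((∃ m ∈ A, ∀ a ∈ A, a ≤ m) ∧ mu = coinitCard B)

end Defs

/-- A topological space is `[ν, ν]`-compact if every open cover of cardinality at most `ν`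
has a subcover of cardinality less than `ν`. -/
def NuNuCompact (X : Type u) [TopologicalSpace X] (ν : Cardinal.{u}) : Prop :=
  ∀ 𝒰 : Set (Set X), (∀ U ∈ 𝒰, IsOpen U) → ⋃₀ 𝒰 = Set.univ → #𝒰 ≤ ν →
    ∃ 𝒱 ⊆ 𝒰, #𝒱 < ν ∧ ⋃₀ 𝒱 = Set.univ

/-- A topological space is weakly `[ν, ν]`-compact if every open cover of cardinality at
most `ν` has a subfamily of cardinality less than `ν` whose union is dense. -/
def WeakNuNuCompact (X : Type u) [TopologicalSpace X] (ν : Cardinal.{u}) : Prop :=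
  ∀ 𝒰 : Set (Set X), (∀ U ∈ 𝒰, IsOpen U) → ⋃₀ 𝒰 = Set.univ → #𝒰 ≤ ν →
    ∃ 𝒱 ⊆ 𝒰, #𝒱 < ν ∧ Dense (⋃₀ 𝒱)

/-- A topological space is initially `lam`-compact if every open cover of cardinality at
most `lam` has a finite subcover. -/
def InitiallyCompact (X : Type u) [TopologicalSpace X] (lam : Cardinal.{u}) : Prop :=
  ∀ 𝒰 : Set (Set X), (∀ U ∈ 𝒰, IsOpen U) → ⋃₀ 𝒰 = Set.univ → #𝒰 ≤ lam →
    ∃ 𝒱 ⊆ 𝒰, 𝒱.Finite ∧ ⋃₀ 𝒱 = Set.univ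

/-- A topological space is weakly initially `lam`-compact if every open cover of cardinality
at most `lam` has a finite subfamily whose union is dense. -/
def WeakInitiallyCompact (X : Type u) [TopologicalSpace X] (lam : Cardinal.{u}) : Prop :=
  ∀ 𝒰 : Set (Set X), (∀ U ∈ 𝒰, IsOpen U) → ⋃₀ 𝒰 = Set.univ → #𝒰 ≤ lam →
    ∃ 𝒱 ⊆ 𝒰, 𝒱.Finite ∧ Dense (⋃₀ 𝒱)

/-- The sequence `x` `D`-converges to `p`: for every open neighbourhood `U` of `p`,
`{i | x i ∈ U} ∈ D`. -/
def DConv {I : Type v} {X : Type u} [TopologicalSpace X] (D : Ultrafilter I)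
    (x : I → X) (p : X) : Prop :=
  ∀ U : Set X, IsOpen U → p ∈ U → {i | x i ∈ U} ∈ D

/-- `X` is `D`-compact: every `I`-indexed sequence of elements of `X` `D`-converges to some
point of `X`. -/
def DCompact {I : Type v} (D : Ultrafilter I) (X : Type u) [TopologicalSpace X] : Prop :=
  ∀ x : I → X, ∃ p : X, DConv D x p

/-- `p` is a `D`-limit point of the sequence of sets `Y`: for every neighbourhood `U`
of `p`, `{i | U ∩ Y i ≠ ∅} ∈ D`. -/
def DLimitPt {I : Type v} {X : Type u} [TopologicalSpace X] (D : Ultrafilter I)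
    (Y : I → Set X) (p : X) : Prop :=
  ∀ U ∈ nhds p, {i | (U ∩ Y i).Nonempty} ∈ D

/-- `X` is `D`-pseudocompact: every `I`-indexed sequence of nonempty open sets of `X` has a
`D`-limit point. -/
def DPseudocompact {I : Type v} (D : Ultrafilter I) (X : Type u) [TopologicalSpace X] : Prop :=
  ∀ O : I → Set X, (∀ i, IsOpen (O i)) → (∀ i, (O i).Nonempty) → ∃ p : X, DLimitPt D O p

/-- The ultrafilter `D` is `ν`-decomposable: there is `f : I → ν` such that the preimage of
every subset of `ν` of cardinality less than `ν` is not in `D`. -/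
def Decomposable {I : Type v} (D : Ultrafilter I) (ν : Cardinal.{u}) : Prop :=
  ∃ f : I → ν.ord.ToType, ∀ S : Set ν.ord.ToType, #S < ν → f ⁻¹' S ∉ D

instance instWO (o : Ordinal) : IsWellOrder o.ToType (· < ·) := isWellOrder_lt

section Aux

variable {Y : Type u} [LinearOrder Y]

lemma cofinCard_le {A S : Set Y} (h1 : S ⊆ A) (h2 : ∀ a ∈ A, ∃ s ∈ S, a ≤ s) :
    cofinCard A ≤ #S :=
  csInf_le' ⟨S, h1, h2, rfl⟩

lemma cofinCard_spec (A : Set Y) :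
    ∃ S : Set Y, S ⊆ A ∧ (∀ a ∈ A, ∃ s ∈ S, a ≤ s) ∧ cofinCard A = #S := by
  have hmem : #A ∈ {c | ∃ S : Set Y, S ⊆ A ∧ (∀ a ∈ A, ∃ s ∈ S, a ≤ s) ∧ c = #S} :=
    ⟨A, subset_rfl, fun a ha => ⟨a, ha, le_rfl⟩, rfl⟩
  exact csInf_mem ⟨_, hmem⟩

lemma exists_above {A T : Set Y} (hT : T ⊆ A) (h : #T < cofinCard A) :
    ∃ a ∈ A, ∀ t ∈ T, t < a := by
  by_contra hc
  push_neg at hc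
  exact absurd (cofinCard_le hT fun a ha =>
    (hc a ha).imp fun t ht => ⟨ht.1, ht.2⟩) h.not_ge

lemma exists_seq {A : Set Y} {ν : Cardinal.{u}} (hν : ℵ₀ ≤ ν) (hcc : ν = cofinCard A) :
    ∃ c : ν.ord.ToType → Y, StrictMono c ∧ (∀ α, c α ∈ A) ∧ ∀ a ∈ A, ∃ α, a ≤ c α := by
  obtain ⟨S, hSA, hScof, hScard⟩ := cofinCard_spec A
  have hmk : #(ν.ord.ToType) = #S := by rw [mk_ord_toType, hcc, hScard]
  obtain ⟨e⟩ := Cardinal.eq.mp hmk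
  have hex : ∀ (α : ν.ord.ToType) (T : Set Y), #T < ν →
      ∃ a ∈ A, (∀ t ∈ T ∩ A, t < a) ∧ ((e α : Y)) ≤ a := by
    intro α T hTcard
    have hsub : insert ((e α : Y)) (T ∩ A) ⊆ A :=
      insert_subset (hSA (e α).2) inter_subset_right
    have hcard : #(insert ((e α : Y)) (T ∩ A) : Set Y) < cofinCard A := by
      rw [← hcc]
      exact lt_of_le_of_lt mk_insert_le
        (add_lt_of_lt hν (lt_of_le_of_lt (mk_le_mk_of_subset inter_subset_left) hTcard)
          (one_lt_aleph0.trans_le hν))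
    obtain ⟨a, ha, hlt⟩ := exists_above hsub hcard
    exact ⟨a, ha, fun t ht => hlt t (mem_insert_of_mem _ ht), (hlt _ (mem_insert _ _)).le⟩
  have hsmall : ∀ α : ν.ord.ToType, ∀ g : (Iio α) → Y, #(range g) < ν :=
    fun α g => lt_of_le_of_lt mk_range_le (mk_Iio_ord_toType α)
  let F : ∀ α : ν.ord.ToType, (∀ β, β < α → Y) → Y := fun α ih =>
    Classical.choose (hex α (range fun β : Iio α => ih β.1 β.2)
      (hsmall α (fun β : Iio α => ih β.1 β.2)))
  let c : ν.ord.ToType → Y := WellFoundedLT.fix F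
  have hc : ∀ α, c α = F α fun β _ => c β := WellFoundedLT.fix_eq F
  have hspec : ∀ α : ν.ord.ToType, c α ∈ A ∧
      (∀ t ∈ (range fun β : Iio α => c β.1) ∩ A, t < c α) ∧ (e α : Y) ≤ c α := by
    intro α
    have := Classical.choose_spec (hex α (range fun β : Iio α => c β.1)
      (hsmall α (fun β : Iio α => c β.1)))
    rw [hc α]
    exact this
  refine ⟨c, ?_, fun α => (hspec α).1, ?_⟩
  · intro β α h
    exact (hspec α).2.1 (c β) ⟨⟨⟨β, h⟩, rfl⟩, (hspec β).1⟩
  · intro a ha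
    obtain ⟨s, hs, hle⟩ := hScof a ha
    refine ⟨e.symm ⟨s, hs⟩, hle.trans ?_⟩
    have h2 := (hspec (e.symm ⟨s, hs⟩)).2.2
    rwa [Equiv.apply_symm_apply] at h2

lemma isRegular_cofinCard {A : Set Y} (hne : A.Nonempty)
    (hnomax : ¬∃ m ∈ A, ∀ a ∈ A, a ≤ m) : (cofinCard A).IsRegular := by
  obtain ⟨S, hSA, hScof, hScard⟩ := cofinCard_spec A
  have hν : ℵ₀ ≤ cofinCard A := by
    rw [hScard]
    rw [aleph0_le_mk_iff, Set.infinite_coe_iff]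
    intro hfin
    have hSne : S.Nonempty := by
      obtain ⟨a, ha⟩ := hne
      obtain ⟨s, hs, _⟩ := hScof a ha
      exact ⟨s, hs⟩
    obtain ⟨m, hmS, hmax⟩ := (Set.finite_coe_iff.mp hfin).exists_maximal hSne
    refine hnomax ⟨m, hSA hmS, fun a ha => ?_⟩
    obtain ⟨s, hs, hle⟩ := hScof a ha
    rcases le_total s m with h | h
    · exact hle.trans h
    · exact hle.trans (hmax hs h)
  refine ⟨hν, ?_⟩
  obtain ⟨c, hmono, hmem, hcof⟩ := exists_seq hν rfl
  obtain ⟨T, hTu, hTcard⟩ :=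
    Order.exists_cof_eq (cofinCard A).ord.ToType
  rw [Ordinal.cof_toType] at hTcard
  have h1 : cofinCard A ≤ #(c '' T) := by
    refine cofinCard_le (image_subset_iff.mpr fun t _ => hmem t) ?_
    intro a ha
    obtain ⟨α, hα⟩ := hcof a ha
    obtain ⟨t, ht, htα⟩ := hTu α
    exact ⟨c t, mem_image_of_mem c ht, hα.trans (hmono.monotone htα)⟩
  exact h1.trans (mk_image_le.trans hTcard.le)

lemma isRegular_coinitCard {B : Set Y} (hne : B.Nonempty)
    (hnomin : ¬∃ m ∈ B, ∀ b ∈ B, m ≤ b) : (coinitCard B).IsRegular := by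
  exact isRegular_cofinCard (Y := Yᵒᵈ) hne hnomin

lemma decomp_of_seq {I : Type v} {D : Ultrafilter I} {L : Set Y} {ν : Cardinal.{u}}
    (hreg : ν.IsRegular) (hcc : ν = cofinCard L) (x : I → Y)
    (hxL : {i | x i ∈ L} ∈ D) (hcross : ∀ a ∈ L, {i | a < x i} ∈ D) :
    (∃ f : I → ν.ord.ToType, ∀ S : Set ν.ord.ToType, #S < ν → f ⁻¹' S ∉ D) := by
  classical
  obtain ⟨c, hmono, hmem, hcof⟩ := exists_seq hreg.aleph0_le hcc
  have hne : Nonempty ν.ord.ToType := by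
    rw [Ordinal.toType_nonempty_iff_ne_zero, Ne, ord_eq_zero]
    rintro rfl
    exact absurd hreg.aleph0_le (by simp [aleph0_ne_zero])
  set f : I → ν.ord.ToType := fun i =>
    if h : ∃ α, x i ≤ c α then wellFounded_lt.min {α | x i ≤ c α} h else hne.some with hf
  refine ⟨f, fun S hS hSD => ?_⟩
  have hbdd : ∃ γ, ∀ s ∈ S, s < γ := by
    by_contra hub
    push_neg at hub
    have hu : IsCofinal S := fun a => (hub a).imp fun s hs => ⟨hs.1, hs.2⟩
    have h1 := Order.cof_le hu
    rw [Ordinal.cof_toType] at h1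
    exact absurd (hreg.2.trans h1) hS.not_ge
  obtain ⟨γ, hγ⟩ := hbdd
  have hsub : f ⁻¹' S ⊆ {i | x i ∈ L}ᶜ ∪ {i | x i ≤ c γ} := by
    intro i hi
    by_cases hiL : x i ∈ L
    · right
      obtain ⟨α, hα⟩ := hcof (x i) hiL
      have hex : ∃ α, x i ≤ c α := ⟨α, hα⟩
      have hx : x i ≤ c (f i) := by
        rw [hf]
        simp only [dif_pos hex]
        exact wellFounded_lt.min_mem {α | x i ≤ c α} hex
      exact hx.trans (hmono.monotone (hγ (f i) hi).le)
    · left; exact hiL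
  have h1 : {i | x i ∈ L}ᶜ ∉ D := Ultrafilter.compl_notMem_iff.mpr hxL
  have h2 : {i | x i ≤ c γ} ∉ D := by
    intro hmem2
    obtain ⟨i, hi⟩ := Ultrafilter.nonempty_of_mem (inter_mem hmem2 (hcross (c γ) (hmem γ)))
    exact absurd hi.1 (not_le.mpr hi.2)
  rcases Ultrafilter.union_mem_iff.mp (mem_of_superset hSD hsub) with h | h
  · exact h1 h
  · exact h2 h

lemma exists_seq_dn {B : Set Y} {ν : Cardinal.{u}} (hν : ℵ₀ ≤ ν) (hcc : ν = coinitCard B) :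
    ∃ c : ν.ord.ToType → Y, (∀ ⦃a b : ν.ord.ToType⦄, a < b → c b < c a) ∧
      (∀ α, c α ∈ B) ∧ ∀ b ∈ B, ∃ α, c α ≤ b := by
  have hcc' : ν = cofinCard (X := Yᵒᵈ) B := hcc
  obtain ⟨c, hmono, hmem, hcof⟩ := exists_seq (Y := Yᵒᵈ) hν hcc'
  exact ⟨c, fun a b h => hmono h, hmem, hcof⟩

lemma decomp_of_seq_dn {I : Type v} {D : Ultrafilter I} {R : Set Y} {ν : Cardinal.{u}}
    (hreg : ν.IsRegular) (hcc : ν = coinitCard R) (x : I → Y)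
    (hxR : {i | x i ∈ R} ∈ D) (hcross : ∀ b ∈ R, {i | x i < b} ∈ D) :
    (∃ f : I → ν.ord.ToType, ∀ S : Set ν.ord.ToType, #S < ν → f ⁻¹' S ∉ D) := by
  have hcc' : ν = cofinCard (X := Yᵒᵈ) R := hcc
  exact decomp_of_seq (Y := Yᵒᵈ) hreg hcc' x hxR hcross

end Aux

section Topo

variable {X : Type u} [LinearOrder X] [TopologicalSpace X] [T2Space X]
  {𝓑 : Set (Set X)} (hB : IsTopologicalBasis 𝓑) (hconv : ∀ s ∈ 𝓑, s.OrdConnected)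

include hB hconv

lemma go_isOpen_Ioi (a : X) : IsOpen (Ioi a) := by
  rw [isOpen_iff_mem_nhds]
  intro y hy
  obtain ⟨U, V, hU, hV, haU, hyV, hUV⟩ := t2_separation hy.ne
  obtain ⟨W, hW𝓑, hyW, hWV⟩ := hB.exists_subset_of_mem_open hyV hV
  refine Filter.mem_of_superset ((hB.isOpen hW𝓑).mem_nhds hyW) ?_
  intro w hw
  by_contra hwa
  simp only [mem_Ioi, not_lt] at hwa
  have haW : a ∈ W := (hconv W hW𝓑).out hw hyW ⟨hwa, hy.le⟩
  exact Set.disjoint_left.mp hUV haU (hWV haW)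

lemma go_isOpen_Iio (a : X) : IsOpen (Iio a) := by
  rw [isOpen_iff_mem_nhds]
  intro y hy
  obtain ⟨U, V, hU, hV, haU, hyV, hUV⟩ := t2_separation hy.ne'
  obtain ⟨W, hW𝓑, hyW, hWV⟩ := hB.exists_subset_of_mem_open hyV hV
  refine Filter.mem_of_superset ((hB.isOpen hW𝓑).mem_nhds hyW) ?_
  intro w hw
  by_contra hwa
  simp only [mem_Iio, not_lt] at hwa
  have haW : a ∈ W := (hconv W hW𝓑).out hyW hw ⟨hy.le, hwa⟩
  exact Set.disjoint_left.mp hUV haU (hWV haW)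

end Topo

/-- A GO space is `D`-compact iff it has no gap and no pseudo-gap whose type is an infinite
regular cardinal `ν` such that `D` is `ν`-decomposable. -/
theorem stmt10 {I : Type v} (D : Ultrafilter I)
    (X : Type u) [LinearOrder X] [TopologicalSpace X] [T2Space X]
    (hGO : ∃ 𝓑 : Set (Set X), IsTopologicalBasis 𝓑 ∧ ∀ s ∈ 𝓑, s.OrdConnected) :
    DCompact D X ↔
      ¬ ∃ (A B : Set X) (ν : Cardinal.{u}), ℵ₀ ≤ ν ∧ ν.IsRegular ∧ Decomposable D ν ∧
        ((IsGap A B ∧ IsGapType ν A B) ∨ (IsPseudoGap A B ∧ IsPseudoGapType ν A B)) := by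

  obtain ⟨𝓑, hBasis, hconv⟩ := hGO
  constructor
  · rintro hDC ⟨A, B, ν, hν, hreg, ⟨f, hf⟩, hbad⟩
    haveI hnomaxi : NoMaxOrder ν.ord.ToType := Cardinal.noMaxOrder hν
    have hdata : IsOpen A ∧ IsOpen B ∧ A ∪ B = Set.univ ∧ (∀ a ∈ A, ∀ b ∈ B, a < b) ∧
        (ν = cofinCard A ∨ ν = coinitCard B) := by
      rcases hbad with ⟨⟨hAo, hBo, hAB, hlt, _, _⟩, ht⟩ | ⟨⟨hAo, hBo, hAB, hlt, _, _, _⟩, ht⟩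
      · exact ⟨hAo, hBo, hAB, hlt, ht⟩
      · exact ⟨hAo, hBo, hAB, hlt, ht.imp And.right And.right⟩
    obtain ⟨hAo, hBo, hAB, hlt, hcc⟩ := hdata
    have hdisj : ∀ p, p ∈ A → p ∈ B → False := fun p ha hb => lt_irrefl p (hlt p ha p hb)
    rcases hcc with hcc | hcc
    · obtain ⟨c, hmono, hmem, hcof⟩ := exists_seq hν hcc
      obtain ⟨p, hp⟩ := hDC fun i => c (f i)
      have hpAB : p ∈ A ∪ B := by rw [hAB]; exact mem_univ p
      rcases hpAB with hpA | hpB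
      · obtain ⟨α₀, hα₀⟩ := hcof p hpA
        obtain ⟨α₁, hα₁⟩ := exists_gt α₀
        have hDmem := hp _ (go_isOpen_Iio hBasis hconv (c α₁)) (lt_of_le_of_lt hα₀ (hmono hα₁))
        have heq : {i | c (f i) ∈ Iio (c α₁)} = f ⁻¹' Iio α₁ := by
          ext i
          simp [hmono.lt_iff_lt]
        rw [heq] at hDmem
        exact hf _ (mk_Iio_ord_toType α₁) hDmem
      · obtain ⟨i, hi⟩ := Ultrafilter.nonempty_of_mem (hp B hBo hpB)
        exact hdisj _ (hmem (f i)) hi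
    · obtain ⟨c, hanti, hmem, hcof⟩ := exists_seq_dn hν hcc
      obtain ⟨p, hp⟩ := hDC fun i => c (f i)
      have hpAB : p ∈ A ∪ B := by rw [hAB]; exact mem_univ p
      rcases hpAB with hpA | hpB
      · obtain ⟨i, hi⟩ := Ultrafilter.nonempty_of_mem (hp A hAo hpA)
        exact hdisj _ hi (hmem (f i))
      · obtain ⟨α₀, hα₀⟩ := hcof p hpB
        obtain ⟨α₁, hα₁⟩ := exists_gt α₀
        have hDmem := hp _ (go_isOpen_Ioi hBasis hconv (c α₁)) (lt_of_lt_of_le (hanti hα₁) hα₀)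
        have heq : {i | c (f i) ∈ Ioi (c α₁)} = f ⁻¹' Iio α₁ := by
          ext i
          simp only [mem_setOf_eq, mem_preimage, mem_Ioi, mem_Iio]
          constructor
          · intro h
            by_contra h'
            rcases (not_lt.mp h').lt_or_eq with h'' | h''
            · exact absurd h (not_lt.mpr (hanti h'').le)
            · rw [← h''] at h; exact lt_irrefl _ h
          · exact fun h => hanti h
        rw [heq] at hDmem
        exact hf _ (mk_Iio_ord_toType α₁) hDmem
  · intro hno x
    by_contra hnc
    push_neg at hnc
    set L : Set X := {a | {i | a < x i} ∈ D} with hLdef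
    have hLlower : ∀ ⦃a a' : X⦄, a' ≤ a → a ∈ L → a' ∈ L := fun a a' h ha =>
      mem_of_superset ha fun i hi => lt_of_le_of_lt h hi
    have hRmem : ∀ b, b ∉ L → {i | x i ≤ b} ∈ D := by
      intro b hb
      have h1 : {i | b < x i}ᶜ ∈ D := Ultrafilter.compl_mem_iff_notMem.mpr hb
      exact mem_of_superset h1 fun i hi => not_lt.mp hi
    have hLR : ∀ a ∈ L, ∀ b ∈ Lᶜ, a < b := by
      intro a ha b hb
      by_contra hab
      exact hb (hLlower (not_lt.mp hab) ha)
    have hconst : ∀ p : X, {i | x i = p} ∈ D → False := by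
      intro p hp
      refine hnc p fun U hU hpU => mem_of_superset hp fun i hi => ?_
      simp only [mem_setOf_eq] at hi ⊢
      rw [hi]; exact hpU
    have hnbhd : ∀ (p : X) (U : Set X), IsOpen U → p ∈ U →
        ∃ V : Set X, p ∈ V ∧ V ⊆ U ∧ IsOpen V ∧ V.OrdConnected := by
      intro p U hU hp
      obtain ⟨V, hV1, hpV, hVU⟩ := hBasis.exists_subset_of_mem_open hp hU
      exact ⟨V, hpV, hVU, hBasis.isOpen hV1, hconv V hV1⟩
    have hLopen : (¬∃ m ∈ L, ∀ a ∈ L, a ≤ m) → IsOpen L := by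
      intro hnomax
      rw [isOpen_iff_forall_mem_open]
      intro a ha
      obtain ⟨a', ha', hlt'⟩ : ∃ a' ∈ L, a < a' := by
        by_contra hcon
        push_neg at hcon
        exact hnomax ⟨a, ha, fun b hb => hcon b hb⟩
      exact ⟨Iio a', fun y hy => hLlower (le_of_lt hy) ha', go_isOpen_Iio hBasis hconv a', hlt'⟩
    have hRopen : (¬∃ m ∈ Lᶜ, ∀ b ∈ Lᶜ, m ≤ b) → IsOpen Lᶜ := by
      intro hnomin
      rw [isOpen_iff_forall_mem_open]
      intro b hb
      obtain ⟨b', hb', hlt'⟩ : ∃ b' ∈ Lᶜ, b' < b := by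
        by_contra hcon
        push_neg at hcon
        exact hnomin ⟨b, hb, fun y hy => hcon y hy⟩
      refine ⟨Ioi b', fun y hy hyL => ?_, go_isOpen_Ioi hBasis hconv b', hlt'⟩
      exact hb' (hLlower (le_of_lt hy) hyL)
    rcases D.mem_or_compl_mem {i | x i ∈ L} with hxL | hxLc
    · have hLne : L.Nonempty := by
        obtain ⟨i, hi⟩ := Ultrafilter.nonempty_of_mem hxL
        exact ⟨x i, hi⟩
      have hLnomax : ¬∃ m ∈ L, ∀ a ∈ L, a ≤ m := by
        rintro ⟨m, hm, hmax⟩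
        have h1 : {i | x i ≤ m} ∈ D := mem_of_superset hxL fun i hi => hmax _ hi
        obtain ⟨i, hi⟩ := Ultrafilter.nonempty_of_mem (inter_mem h1 (hm : {i | m < x i} ∈ D))
        exact absurd hi.1 (not_le.mpr hi.2)
      have hreg := isRegular_cofinCard hLne hLnomax
      have hdec : Decomposable D (cofinCard L) := decomp_of_seq hreg rfl x hxL fun a ha => ha
      have hLo := hLopen hLnomax
      by_cases hRmin : ∃ m ∈ Lᶜ, ∀ b ∈ Lᶜ, m ≤ b
      · obtain ⟨m', hm', hmin⟩ := hRmin
        by_cases hV : ∃ V, IsOpen V ∧ m' ∈ V ∧ V ∩ L = ∅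
        · obtain ⟨V, hVo, hm'V, hVL⟩ := hV
          have hVR : V ⊆ Lᶜ := fun y hy hyL => (eq_empty_iff_forall_notMem.mp hVL y) ⟨hy, hyL⟩
          have hRIci : Lᶜ = Ici m' := by
            apply Subset.antisymm
            · exact fun b hb => hmin b hb
            · intro b hb hbL
              exact hm' (hLlower hb hbL)
          have hRo : IsOpen Lᶜ := by
            have h2 : Lᶜ = V ∪ Ioi m' := by
              rw [hRIci]
              apply Subset.antisymm
              · intro y hy
                rcases eq_or_lt_of_le hy with h | h
                · exact Or.inl (h ▸ hm'V)
                · exact Or.inr h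
              · rintro y (hy | hy)
                · exact hRIci ▸ hVR hy
                · exact le_of_lt hy
            rw [h2]
            exact hVo.union (go_isOpen_Ioi hBasis hconv m')
          exact hno ⟨L, Lᶜ, cofinCard L, hreg.aleph0_le, hreg, hdec,
            Or.inr ⟨⟨hLo, hRo, union_compl_self L, hLR, hLne, ⟨m', hm'⟩,
              Or.inr ⟨hLnomax, m', hm', hmin⟩⟩, Or.inl ⟨⟨m', hm', hmin⟩, rfl⟩⟩⟩
        · refine hnc m' fun U hU hm'U => ?_
          obtain ⟨V, hm'V, hVU, hVo, hVc⟩ := hnbhd m' U hU hm'U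
          have hVL : (V ∩ L).Nonempty := by
            rw [nonempty_iff_ne_empty]
            intro h
            exact hV ⟨V, hVo, hm'V, h⟩
          obtain ⟨a, haV, haL⟩ := hVL
          refine mem_of_superset
            (inter_mem (haL : {i | a < x i} ∈ D) (hRmem m' hm')) fun i hi => ?_
          exact hVU ((hVc.out haV hm'V) ⟨hi.1.le, hi.2⟩)
      · have hRo := hRopen hRmin
        exact hno ⟨L, Lᶜ, cofinCard L, hreg.aleph0_le, hreg, hdec,
          Or.inl ⟨⟨hLo, hRo, union_compl_self L, hLR, hLnomax, hRmin⟩, Or.inl rfl⟩⟩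
    · have hxR : {i | x i ∈ Lᶜ} ∈ D := hxLc
      have hRne : Lᶜ.Nonempty := by
        obtain ⟨i, hi⟩ := Ultrafilter.nonempty_of_mem hxR
        exact ⟨x i, hi⟩
      have hRnomin : ¬∃ m ∈ Lᶜ, ∀ b ∈ Lᶜ, m ≤ b := by
        rintro ⟨m', hm', hmin⟩
        have h1 : {i | m' ≤ x i} ∈ D := mem_of_superset hxR fun i hi => hmin _ hi
        exact hconst m' (mem_of_superset (inter_mem h1 (hRmem m' hm'))
          fun i hi => le_antisymm hi.2 hi.1)
      have hreg := isRegular_coinitCard hRne hRnomin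
      have hcross : ∀ b ∈ Lᶜ, {i | x i < b} ∈ D := by
        intro b hb
        obtain ⟨b', hb', hlt'⟩ : ∃ b' ∈ Lᶜ, b' < b := by
          by_contra hcon
          push_neg at hcon
          exact hRnomin ⟨b, hb, fun y hy => hcon y hy⟩
        exact mem_of_superset (hRmem b' hb') fun i hi => lt_of_le_of_lt hi hlt'
      have hdec : Decomposable D (coinitCard Lᶜ) := decomp_of_seq_dn hreg rfl x hxR hcross
      have hRo := hRopen hRnomin
      by_cases hLmax : ∃ m ∈ L, ∀ a ∈ L, a ≤ m
      · obtain ⟨m, hm, hmax⟩ := hLmax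
        by_cases hV : ∃ V, IsOpen V ∧ m ∈ V ∧ V ∩ Lᶜ = ∅
        · obtain ⟨V, hVo, hmV, hVR⟩ := hV
          have hVL : V ⊆ L := fun y hy => by
            by_contra hyL
            exact (eq_empty_iff_forall_notMem.mp hVR y) ⟨hy, hyL⟩
          have hLIic : L = Iic m := by
            apply Subset.antisymm
            · exact fun a ha => hmax a ha
            · exact fun a ha => hLlower ha hm
          have hLo : IsOpen L := by
            have h2 : L = V ∪ Iio m := by
              rw [hLIic]
              apply Subset.antisymm
              · intro y hy
                rcases eq_or_lt_of_le hy with h | h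
                · exact Or.inl (h ▸ hmV)
                · exact Or.inr h
              · rintro y (hy | hy)
                · exact hLIic ▸ hVL hy
                · exact le_of_lt hy
            rw [h2]
            exact hVo.union (go_isOpen_Iio hBasis hconv m)
          exact hno ⟨L, Lᶜ, coinitCard Lᶜ, hreg.aleph0_le, hreg, hdec,
            Or.inr ⟨⟨hLo, hRo, union_compl_self L, hLR, ⟨m, hm⟩, hRne,
              Or.inl ⟨⟨m, hm, hmax⟩, hRnomin⟩⟩, Or.inr ⟨⟨m, hm, hmax⟩, rfl⟩⟩⟩
        · refine hnc m fun U hU hmU => ?_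
          obtain ⟨V, hmV, hVU, hVo, hVc⟩ := hnbhd m U hU hmU
          have hVR' : (V ∩ Lᶜ).Nonempty := by
            rw [nonempty_iff_ne_empty]
            intro h
            exact hV ⟨V, hVo, hmV, h⟩
          obtain ⟨b, hbV, hbR⟩ := hVR'
          refine mem_of_superset
            (inter_mem (hm : {i | m < x i} ∈ D) (hRmem b hbR)) fun i hi => ?_
          exact hVU ((hVc.out hmV hbV) ⟨hi.1.le, hi.2⟩)
      · have hLo := hLopen hLmax
        exact hno ⟨L, Lᶜ, coinitCard Lᶜ, hreg.aleph0_le, hreg, hdec,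
          Or.inl ⟨⟨hLo, hRo, union_compl_self L, hLR, hLmax, hRnomin⟩, Or.inr rfl⟩⟩
end

section
/- Let D be an ultrafilter on a set I and let X be a GO space. Then X is D-compact if and only if X is weakly [ν,ν]-compact for every infinite regular cardinal ν such that D is ν-decomposable. -/
universe u v

open Set Cardinal Filter Topology TopologicalSpace

section AuxProof

lemma aux_mk_Iic_lt {c : Cardinal.{u}} (hc : ℵ₀ ≤ c) (γ : c.ord.ToType) :
    #(Set.Iic γ) < c := by
  have h1 : #(Set.Iio γ) < c := Cardinal.mk_Iio_ord_toType γ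
  have hsub : Set.Iic γ ⊆ insert γ (Set.Iio γ) := by
    intro t ht
    rcases lt_or_eq_of_le (Set.mem_Iic.1 ht) with h | h
    · exact Set.mem_insert_of_mem _ h
    · exact h ▸ Set.mem_insert _ _
  calc #(Set.Iic γ) ≤ #(insert γ (Set.Iio γ) : Set _) := Cardinal.mk_le_mk_of_subset hsub
    _ ≤ #(Set.Iio γ) + 1 := Cardinal.mk_insert_le
    _ < c := Cardinal.add_lt_of_lt hc h1 (lt_of_lt_of_le Cardinal.one_lt_aleph0 hc)

lemma rays_open {X : Type u} [LinearOrder X] [TopologicalSpace X] [T2Space X]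
    (hGO : ∃ 𝓑 : Set (Set X), IsTopologicalBasis 𝓑 ∧ ∀ s ∈ 𝓑, s.OrdConnected) :
    (∀ a : X, IsOpen (Set.Iio a)) ∧ (∀ a : X, IsOpen (Set.Ioi a)) := by
  obtain ⟨𝓑, hB, hconv⟩ := hGO
  constructor
  · intro a
    rw [isOpen_iff_forall_mem_open]
    intro p hp
    have hpmem : p ∈ ({a}ᶜ : Set X) := by
      simp only [Set.mem_compl_iff, Set.mem_singleton_iff]
      exact ne_of_lt hp
    obtain ⟨V, hV, hpV, hVsub⟩ := hB.exists_subset_of_mem_open hpmem isOpen_compl_singleton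
    refine ⟨V, fun q hq => ?_, hB.isOpen hV, hpV⟩
    by_contra h
    simp only [Set.mem_Iio, not_lt] at h
    have : a ∈ V := (hconv V hV).out hpV hq ⟨le_of_lt hp, h⟩
    exact hVsub this rfl
  · intro a
    rw [isOpen_iff_forall_mem_open]
    intro p hp
    have hpmem : p ∈ ({a}ᶜ : Set X) := by
      simp only [Set.mem_compl_iff, Set.mem_singleton_iff]
      exact (ne_of_lt hp).symm
    obtain ⟨V, hV, hpV, hVsub⟩ := hB.exists_subset_of_mem_open hpmem isOpen_compl_singleton
    refine ⟨V, fun q hq => ?_, hB.isOpen hV, hpV⟩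
    by_contra h
    simp only [Set.mem_Ioi, not_lt] at h
    have : a ∈ V := (hconv V hV).out hq hpV ⟨h, le_of_lt hp⟩
    exact hVsub this rfl

noncomputable def chainF {X : Type u} [LinearOrder X] [Nonempty X] (A : Set X)
    (c : Cardinal.{u}) (s : c.ord.ToType → X) : c.ord.ToType → X :=
  WellFoundedLT.fix fun α ih =>
    Classical.epsilon fun a => a ∈ A ∧
      ∀ t ∈ s '' Set.Iic α ∪ Set.range (fun β : Set.Iio α => ih β.1 β.2), t < a

lemma chainF_eq {X : Type u} [LinearOrder X] [Nonempty X] (A : Set X)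
    (c : Cardinal.{u}) (s : c.ord.ToType → X) (α : c.ord.ToType) :
    chainF A c s α = Classical.epsilon fun a => a ∈ A ∧
      ∀ t ∈ s '' Set.Iic α ∪ Set.range (fun β : Set.Iio α => chainF A c s β.1), t < a :=
  WellFoundedLT.fix_eq _ α

lemma exists_chain {X : Type u} [LinearOrder X] (A : Set X) (hne : A.Nonempty)
    (hnomax : ∀ a ∈ A, ∃ a' ∈ A, a < a') :
    ∃ ν : Cardinal.{u}, ν.IsRegular ∧ ∃ g : ν.ord.ToType → X,
      (∀ α, g α ∈ A) ∧ Monotone g ∧ (∀ a ∈ A, ∃ α, a < g α) ∧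
      ∀ T : Set ν.ord.ToType, #T < ν → ∃ β, ∀ t ∈ T, t ≤ β := by
  have hXne : Nonempty X := ⟨hne.choose⟩
  set P : Set Cardinal.{u} := {c | ∃ S : Set X, S ⊆ A ∧ (∀ a ∈ A, ∃ t ∈ S, a ≤ t) ∧ c = #S}
    with hP
  have hPne : P.Nonempty := ⟨#A, A, subset_rfl, fun a ha => ⟨a, ha, le_rfl⟩, rfl⟩
  set c := sInf P with hc
  have hcP : c ∈ P := csInf_mem hPne
  obtain ⟨S, hSA, hScof, hcS⟩ := hcP
  have hcinf : ℵ₀ ≤ c := by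
    by_contra h
    have hSfin : S.Finite := by
      rw [← Cardinal.lt_aleph0_iff_set_finite, ← hcS]
      exact not_le.1 h
    have hSne : S.Nonempty := by
      obtain ⟨a, ha⟩ := hne
      obtain ⟨t, htS, _⟩ := hScof a ha
      exact ⟨t, htS⟩
    obtain ⟨m, hmS, hm⟩ : ∃ m ∈ S, ∀ t ∈ S, m ≤ t → m = t := by
      obtain ⟨m, hmS, hm⟩ := Set.Finite.exists_maximal hSfin hSne
      exact ⟨m, hmS, fun t ht h => le_antisymm h (hm ht h)⟩
    obtain ⟨a', ha'A, hlt⟩ := hnomax m (hSA hmS)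
    obtain ⟨t, htS, hat⟩ := hScof a' ha'A
    have : m = t := hm t htS (le_trans (le_of_lt hlt) hat)
    exact absurd (lt_of_lt_of_le hlt hat) (by rw [← this]; exact lt_irrefl m)
  have hbdd : ∀ T : Set X, T ⊆ A → #T < c → ∃ a ∈ A, ∀ t ∈ T, t < a := by
    intro T hTA hTlt
    by_contra h
    push_neg at h
    have hTcof : ∀ a ∈ A, ∃ t ∈ T, a ≤ t := by
      intro a ha
      obtain ⟨t, htT, hta⟩ := h a ha
      exact ⟨t, htT, hta⟩
    exact absurd (csInf_le (OrderBot.bddBelow P) (⟨T, hTA, hTcof, rfl⟩ : #T ∈ P))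
      (not_le.2 hTlt)
  have hcards : #(c.ord.ToType) = #S := by
    rw [Cardinal.mk_toType, Cardinal.card_ord, hcS]
  obtain ⟨e⟩ := Cardinal.eq.1 hcards
  set s : c.ord.ToType → X := fun α => (e α : X) with hs
  have hsA : ∀ α, s α ∈ A := fun α => hSA (e α).2
  have hscof : ∀ a ∈ A, ∃ α, a ≤ s α := by
    intro a ha
    obtain ⟨t, htS, hat⟩ := hScof a ha
    refine ⟨e.symm ⟨t, htS⟩, ?_⟩
    simp only [hs, Equiv.apply_symm_apply]
    exact hat
  set g := chainF A c s with hg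
  have gspec : ∀ α, g α ∈ A ∧
      ∀ t ∈ s '' Set.Iic α ∪ Set.range (fun β : Set.Iio α => g β.1), t < g α := by
    intro α
    induction α using WellFoundedLT.induction with
    | ind α ih =>
      set Tset := s '' Set.Iic α ∪ Set.range (fun β : Set.Iio α => g β.1) with hT
      have hTsub : Tset ⊆ A := by
        rintro t (⟨β, _, rfl⟩ | ⟨β, rfl⟩)
        · exact hsA β
        · exact (ih β.1 β.2).1
      have hTcard : #Tset < c := by
        calc #Tset ≤ #(s '' Set.Iic α) + #(Set.range fun β : Set.Iio α => g β.1) :=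
              Cardinal.mk_union_le _ _
          _ ≤ #(Set.Iic α) + #(Set.Iio α) :=
              add_le_add Cardinal.mk_image_le Cardinal.mk_range_le
          _ < c := Cardinal.add_lt_of_lt hcinf (aux_mk_Iic_lt hcinf α)
              (Cardinal.mk_Iio_ord_toType α)
      obtain ⟨a, haA, hub⟩ := hbdd Tset hTsub hTcard
      have hspec := Classical.epsilon_spec
        (p := fun a => a ∈ A ∧ ∀ t ∈ Tset, t < a) ⟨a, haA, hub⟩
      rw [hg, chainF_eq]
      exact hspec
  have hgA : ∀ α, g α ∈ A := fun α => (gspec α).1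
  have hgmono : Monotone g := by
    intro β α h
    rcases eq_or_lt_of_le h with rfl | h
    · exact le_rfl
    · exact le_of_lt ((gspec α).2 _ (Or.inr ⟨⟨β, h⟩, rfl⟩))
  have hgcof : ∀ a ∈ A, ∃ α, a < g α := by
    intro a ha
    obtain ⟨α, hα⟩ := hscof a ha
    exact ⟨α, lt_of_le_of_lt hα ((gspec α).2 _ (Or.inl ⟨α, Set.self_mem_Iic, rfl⟩))⟩
  have hbT : ∀ T : Set c.ord.ToType, #T < c → ∃ β, ∀ t ∈ T, t < β := by
    intro T hT
    have himg : #(g '' T) < c := lt_of_le_of_lt Cardinal.mk_image_le hT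
    obtain ⟨a, haA, hub⟩ := hbdd (g '' T) (by rintro _ ⟨t, _, rfl⟩; exact hgA t) himg
    obtain ⟨β, hβ⟩ := hgcof a haA
    refine ⟨β, fun t ht => ?_⟩
    by_contra hc'
    push_neg at hc'
    exact lt_irrefl a (lt_of_lt_of_le hβ (hgmono hc') |>.trans (hub _ ⟨t, ht, rfl⟩))
  have hreg : c.IsRegular := by
    refine ⟨hcinf, ?_⟩
    by_contra h
    push_neg at h
    haveI : IsWellOrder c.ord.ToType (· < ·) := isWellOrder_lt
    obtain ⟨T, hTub, hTcard⟩ := Order.exists_cof_eq c.ord.ToType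
    rw [Ordinal.cof_toType] at hTcard
    have hTlt : #T < c := hTcard ▸ h
    obtain ⟨β, hβ⟩ := hbT T hTlt
    obtain ⟨t, htT, hbt⟩ := hTub β
    exact absurd (hβ t htT) (not_lt.2 hbt)
  exact ⟨c, hreg, g, hgA, hgmono, hgcof,
    fun T hT => (hbT T hT).imp (fun β h t ht => (h t ht).le)⟩

lemma keyLemma {I : Type v} (D : Ultrafilter I) {X : Type u} [LinearOrder X]
    [TopologicalSpace X] (x : I → X)
    (hIio : ∀ a : X, IsOpen (Set.Iio a)) (hIoi : ∀ a : X, IsOpen (Set.Ioi a))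
    (A : Set X) (hA : IsOpen A) (hAc : IsOpen Aᶜ) (hne : A.Nonempty)
    (hnomax : ∀ a ∈ A, ∃ a' ∈ A, a < a')
    (hiic : ∀ a ∈ A, x ⁻¹' (Set.Iic a) ∉ D)
    (hmem : x ⁻¹' A ∈ D)
    (H : ∀ ν : Cardinal.{u}, ℵ₀ ≤ ν → ν.IsRegular → Decomposable D ν →
      WeakNuNuCompact X ν) :
    False := by
  classical
  obtain ⟨ν, hreg, g, hgA, hgmono, hgcof, hbdd⟩ := exists_chain A hne hnomax
  have hνinf : ℵ₀ ≤ ν := hreg.1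
  have hto : Nonempty ν.ord.ToType := by
    rw [Ordinal.toType_nonempty_iff_ne_zero]
    intro h0
    have hν0 : ν = 0 := by
      have := congrArg Ordinal.card h0
      rwa [Cardinal.card_ord, Ordinal.card_zero] at this
    rw [hν0] at hνinf
    exact Cardinal.aleph0_ne_zero (le_zero_iff.1 hνinf)
  have hdec : Decomposable D ν := by
    refine ⟨fun i => if h : x i ∈ A then (hgcof _ h).choose else hto.some, ?_⟩
    intro S hS hmemD
    obtain ⟨β, hβ⟩ := hbdd S hS
    have hsub : (fun i => if h : x i ∈ A then (hgcof _ h).choose else hto.some) ⁻¹' S ⊆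
        (x ⁻¹' A)ᶜ ∪ (x ⁻¹' Set.Iic (g β)) := by
      intro i hi
      by_cases h : x i ∈ A
      · right
        simp only [Set.mem_preimage] at hi ⊢
        rw [dif_pos h] at hi
        exact le_trans (hgcof _ h).choose_spec.le (hgmono (hβ _ hi))
      · left; exact h
    have h1 : (x ⁻¹' A)ᶜ ∉ D := fun h =>
      (Ultrafilter.compl_mem_iff_notMem.1 h) hmem
    have h2 : x ⁻¹' Set.Iic (g β) ∉ D := hiic _ (hgA β)
    have : (x ⁻¹' A)ᶜ ∪ (x ⁻¹' Set.Iic (g β)) ∈ D := Filter.mem_of_superset hmemD hsub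
    rcases Ultrafilter.union_mem_iff.1 this with h | h
    · exact h1 h
    · exact h2 h
  have hW : WeakNuNuCompact X ν := H ν hνinf hreg hdec
  set 𝒰 : Set (Set X) := insert Aᶜ (Set.range fun α => Set.Iio (g α)) with h𝒰
  have hUopen : ∀ U ∈ 𝒰, IsOpen U := by
    rintro U hU
    rcases Set.mem_insert_iff.1 hU with rfl | ⟨α, rfl⟩
    · exact hAc
    · exact hIio _
  have hUcover : ⋃₀ 𝒰 = Set.univ := by
    ext p
    simp only [Set.mem_sUnion, Set.mem_univ, iff_true]
    by_cases hp : p ∈ A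
    · obtain ⟨α, hα⟩ := hgcof p hp
      exact ⟨_, Set.mem_insert_of_mem _ ⟨α, rfl⟩, hα⟩
    · exact ⟨Aᶜ, Set.mem_insert _ _, hp⟩
  have hUcard : #𝒰 ≤ ν := by
    calc #𝒰 ≤ #(Set.range fun α => Set.Iio (g α)) + 1 := Cardinal.mk_insert_le
      _ ≤ #(ν.ord.ToType) + 1 := add_le_add_left Cardinal.mk_range_le _
      _ = ν + 1 := by rw [Cardinal.mk_toType, Cardinal.card_ord]
      _ ≤ ν + ν := add_le_add_right (Cardinal.one_le_aleph0.trans hνinf) _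
      _ = ν := Cardinal.add_eq_self hνinf
  obtain ⟨𝒱, h𝒱𝒰, h𝒱card, h𝒱dense⟩ := hW 𝒰 hUopen hUcover hUcard
  set idx : Set X → ν.ord.ToType :=
    fun V => if h : ∃ α, Set.Iio (g α) = V then h.choose else hto.some with hidx
  have hTcard : #(idx '' 𝒱) < ν := lt_of_le_of_lt Cardinal.mk_image_le h𝒱card
  obtain ⟨β, hβ⟩ := hbdd _ hTcard
  have hsub : ⋃₀ 𝒱 ⊆ Aᶜ ∪ Set.Iio (g β) := by
    rintro p ⟨V, hV𝒱, hpV⟩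
    rcases Set.mem_insert_iff.1 (h𝒱𝒰 hV𝒱) with rfl | ⟨α, hα⟩
    · left; exact hpV
    · right
      have hex : ∃ α, Set.Iio (g α) = V := ⟨α, hα⟩
      have hch : Set.Iio (g hex.choose) = V := hex.choose_spec
      have hmemT : idx V ∈ idx '' 𝒱 := ⟨V, hV𝒱, rfl⟩
      have hidxV : idx V = hex.choose := by rw [hidx]; exact dif_pos hex
      have hle : g hex.choose ≤ g β := by
        apply hgmono
        rw [← hidxV]
        exact hβ _ hmemT
      rw [← hch] at hpV
      exact lt_of_lt_of_le hpV hle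
  obtain ⟨a', ha'A, ha'⟩ := hnomax _ (hgA β)
  obtain ⟨p, hp1, hp2⟩ := (dense_iff_inter_open.1 h𝒱dense) _ (hA.inter (hIoi (g β)))
    ⟨a', ha'A, ha'⟩
  rcases hsub hp2 with h | h
  · exact h hp1.1
  · exact absurd hp1.2 (not_lt.2 h.le)

end AuxProof

/-- A GO space is `D`-compact iff it is weakly `[ν, ν]`-compact for every infinite regular
cardinal `ν` such that `D` is `ν`-decomposable. -/
theorem stmt11 {I : Type v} (D : Ultrafilter I)
    (X : Type u) [LinearOrder X] [TopologicalSpace X] [T2Space X]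
    (hGO : ∃ 𝓑 : Set (Set X), IsTopologicalBasis 𝓑 ∧ ∀ s ∈ 𝓑, s.OrdConnected) :
    DCompact D X ↔
      ∀ ν : Cardinal.{u}, ℵ₀ ≤ ν → ν.IsRegular → Decomposable D ν →
        WeakNuNuCompact X ν := by
  obtain ⟨𝓑, hB, hconv⟩ := hGO
  have hrays := rays_open ⟨𝓑, hB, hconv⟩
  constructor
  · intro hDC ν hν hreg hdec 𝒰 hUopen hUcover hUcard
    rcases isEmpty_or_nonempty X with hX | hX
    · refine ⟨∅, Set.empty_subset _, ?_, fun p => (hX.false p).elim⟩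
      rw [Cardinal.mk_emptyCollection]
      exact lt_of_lt_of_le Cardinal.aleph0_pos hν
    · by_contra hno
      push_neg at hno
      obtain ⟨x0⟩ := hX
      have h𝒰ne : 𝒰.Nonempty := by
        have hx0 : x0 ∈ ⋃₀ 𝒰 := hUcover ▸ Set.mem_univ x0
        obtain ⟨U, hU, _⟩ := hx0
        exact ⟨U, hU⟩
      have hcards : #𝒰 ≤ #(ν.ord.ToType) := by
        rw [Cardinal.mk_toType, Cardinal.card_ord]; exact hUcard
      obtain ⟨emb⟩ := hcards
      have h𝒰sne : Nonempty ↥𝒰 := h𝒰ne.to_subtype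
      set f : ν.ord.ToType → Set X := fun α => ((Function.invFun emb) α : Set X) with hf
      have hf𝒰 : ∀ α, f α ∈ 𝒰 := fun α => ((Function.invFun emb) α).2
      have hfsurj : ∀ U ∈ 𝒰, ∃ α, f α = U := by
        intro U hU
        refine ⟨emb ⟨U, hU⟩, ?_⟩
        rw [hf]
        simp only [Function.leftInverse_invFun emb.injective ⟨U, hU⟩]
      have hpt : ∀ α : ν.ord.ToType, ∃ p : X, p ∉ closure (⋃₀ (f '' Set.Iio α)) := by
        intro α
        have h1 : f '' Set.Iio α ⊆ 𝒰 := by rintro _ ⟨β, _, rfl⟩; exact hf𝒰 β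
        have h2 : #(f '' Set.Iio α) < ν :=
          lt_of_le_of_lt Cardinal.mk_image_le (Cardinal.mk_Iio_ord_toType α)
        have h3 := hno _ h1 h2
        rw [Dense] at h3
        push_neg at h3
        obtain ⟨p, hp⟩ := h3
        exact ⟨p, hp⟩
      choose p hp using hpt
      obtain ⟨fdec, hfdec⟩ := hdec
      obtain ⟨q, hq⟩ := hDC (fun i => p (fdec i))
      have hq𝒰 : q ∈ ⋃₀ 𝒰 := hUcover ▸ Set.mem_univ q
      obtain ⟨U, hU𝒰, hqU⟩ := hq𝒰
      obtain ⟨γ, rfl⟩ := hfsurj U hU𝒰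
      have hDmem : {i | p (fdec i) ∈ f γ} ∈ D := hq _ (hUopen _ hU𝒰) hqU
      have hsub : {i | p (fdec i) ∈ f γ} ⊆ fdec ⁻¹' (Set.Iic γ) := by
        intro i hi
        by_contra h
        have hlt : γ < fdec i := not_le.1 (by simpa using h)
        have hsub2 : f γ ⊆ ⋃₀ (f '' Set.Iio (fdec i)) :=
          fun z hz => ⟨f γ, ⟨γ, hlt, rfl⟩, hz⟩
        exact hp (fdec i) (subset_closure (hsub2 hi))
      exact hfdec _ (aux_mk_Iic_lt hν γ) (Filter.mem_of_superset hDmem hsub)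
  · intro H x
    by_contra hno
    push_neg at hno
    simp only [DConv, not_forall] at hno
    have hI : Nonempty I := by
      by_contra h
      have hemp : (∅ : Set I) ∈ D := by
        have huniv := Filter.univ_mem (f := (D : Filter I))
        rwa [Set.univ_eq_empty_iff.2 (not_nonempty_iff.1 h)] at huniv
      exact D.empty_notMem hemp
    have hXne : Nonempty X := ⟨x (Classical.arbitrary I)⟩
    have hU : ∀ p : X, ∃ U, p ∈ U ∧ U ∈ 𝓑 ∧ {i | x i ∈ U} ∉ D := by
      intro p
      obtain ⟨V, hVopen, hpV, hVD⟩ := hno p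
      obtain ⟨W, hW𝓑, hpW, hWV⟩ := hB.exists_subset_of_mem_open hpV hVopen
      exact ⟨W, hpW, hW𝓑, fun h => hVD (Filter.mem_of_superset h (fun i hi => hWV hi))⟩
    choose U hpU hUB hUD using hU
    set B : Set X := {p | {i | x i ≤ p} ∈ D} with hBdef
    set A : Set X := Bᶜ with hAdef
    have hconvU : ∀ p, (U p).OrdConnected := fun p => hconv _ (hUB p)
    have hUo : ∀ p, IsOpen (U p) := fun p => hB.isOpen (hUB p)
    have hcomp : ∀ s : Set I, s ∉ D → sᶜ ∈ D :=
      fun s h => Ultrafilter.compl_mem_iff_notMem.2 h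
    have hAopen : IsOpen A := by
      rw [isOpen_iff_forall_mem_open]
      intro q0 hq0
      refine ⟨U q0, fun q hq => ?_, hUo q0, hpU q0⟩
      intro hqB
      have hq0B : {i | x i ≤ q0} ∉ D := hq0
      rcases le_or_gt q q0 with h | h
      · exact hq0B (Filter.mem_of_superset hqB (fun i hi => le_trans hi h))
      · have h1 : {i | q0 < x i} ∈ D := by
          have hcc := hcomp _ hq0B
          have : {i | q0 < x i} = {i | x i ≤ q0}ᶜ := by
            ext i; simp [not_le]
          rwa [this]
        have h3 : ({i | q0 < x i} ∩ {i | x i ≤ q}) ∩ {i | x i ∈ U q0}ᶜ ∈ D :=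
          Filter.inter_mem (Filter.inter_mem h1 hqB) (hcomp _ (hUD q0))
        obtain ⟨i, ⟨hi1, hi2⟩, hi3⟩ := D.nonempty_of_mem h3
        exact hi3 ((hconvU q0).out (hpU q0) hq ⟨le_of_lt hi1, hi2⟩)
    have hBopen : IsOpen B := by
      rw [isOpen_iff_forall_mem_open]
      intro q0 hq0
      refine ⟨U q0, fun q hq => ?_, hUo q0, hpU q0⟩
      rcases le_or_gt q0 q with h | h
      · exact Filter.mem_of_superset hq0 (fun i hi => le_trans hi h)
      · by_contra hqB
        have h1 : {i | q < x i} ∈ D := by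
          have hcc := hcomp _ hqB
          have : {i | q < x i} = {i | x i ≤ q}ᶜ := by
            ext i; simp [not_le]
          rwa [this]
        have h3 : ({i | q < x i} ∩ {i | x i ≤ q0}) ∩ {i | x i ∈ U q0}ᶜ ∈ D :=
          Filter.inter_mem (Filter.inter_mem h1 hq0) (hcomp _ (hUD q0))
        obtain ⟨i, ⟨hi1, hi2⟩, hi3⟩ := D.nonempty_of_mem h3
        exact hi3 ((hconvU q0).out hq (hpU q0) ⟨le_of_lt hi1, hi2⟩)
    by_cases hSB : x ⁻¹' B ∈ D
    · -- B case: dualize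
      have hBne : B.Nonempty := by
        obtain ⟨i, hi⟩ := D.nonempty_of_mem hSB
        exact ⟨x i, hi⟩
      have hnomin : ∀ b ∈ B, ∃ b' ∈ B, b' < b := by
        intro b hb
        by_contra h
        push_neg at h
        have h1 : x ⁻¹' B ∩ {i | x i ≤ b} ∈ D := Filter.inter_mem hSB hb
        have h3 := Filter.inter_mem h1 (hcomp _ (hUD b))
        obtain ⟨i, ⟨hi1, hi2⟩, hi3⟩ := D.nonempty_of_mem h3
        have hxib : x i = b := le_antisymm hi2 (h _ hi1)
        exact hi3 (hxib ▸ hpU b)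
      have hici : ∀ b ∈ B, x ⁻¹' (Set.Ici b) ∉ D := by
        intro b hb hmem'
        obtain ⟨b', hb', hlt⟩ := hnomin b hb
        have hint : x ⁻¹' Set.Ici b ∩ {i | x i ≤ b'} ∈ D := Filter.inter_mem hmem' hb'
        obtain ⟨i, hi1, hi2⟩ := D.nonempty_of_mem hint
        exact absurd (le_trans hi1 hi2) (not_le.2 hlt)
      exact keyLemma (X := Xᵒᵈ) D x (fun a => hrays.2 (OrderDual.ofDual a))
        (fun a => hrays.1 (OrderDual.ofDual a)) B hBopen
        (by rw [hAdef] at hAopen; exact hAopen) hBne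
        (fun b hb => (hnomin b hb).imp (fun b' hb' => ⟨hb'.1, hb'.2⟩))
        hici hSB (fun ν h1 h2 h3 => H ν h1 h2 h3)
    · -- A case
      have hmemA : x ⁻¹' A ∈ D := by
        have := hcomp _ hSB
        rwa [hAdef, Set.preimage_compl]
      have hAne : A.Nonempty := by
        obtain ⟨i, hi⟩ := D.nonempty_of_mem hmemA
        exact ⟨x i, hi⟩
      have hnomaxA : ∀ a ∈ A, ∃ a' ∈ A, a < a' := by
        intro a ha
        by_contra h
        push_neg at h
        have hsub : x ⁻¹' A ⊆ {i | x i ≤ a} := fun i hi => h _ hi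
        exact ha (Filter.mem_of_superset hmemA hsub)
      exact keyLemma D x hrays.1 hrays.2 A hAopen
        (by rw [hAdef, compl_compl]; exact hBopen) hAne hnomaxA
        (fun a ha => ha) hmemA H
end

section
/- Let H be a set of infinite regular cardinals. Suppose that for every ν ∈ H there exists an ultrafilter D_ν (on some set) such that D_ν is ν-decomposable and every infinite regular cardinal μ for which D_ν is μ-decomposable belongs to H. Then for every family (X_j)_{j∈J} of nonempty GO spaces, if each X_j is H-compact then the product ∏_{j∈J} X_j (with the product topology) is H-compact. -/
universe u v

open Set Cardinal Filter Topology TopologicalSpace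

section Aux

open Ordinal

/-- In a `T1` space with a basis of order-convex sets, lower rays are open. -/
theorem aux_isOpen_Iio {X : Type u} [LinearOrder X] [TopologicalSpace X] [T1Space X]
    {𝓑 : Set (Set X)} (hB : IsTopologicalBasis 𝓑) (hconv : ∀ s ∈ 𝓑, s.OrdConnected)
    (b : X) : IsOpen (Set.Iio b) := by
  rw [isOpen_iff_forall_mem_open]
  intro a ha
  have hmem : a ∈ ({b}ᶜ : Set X) := by simpa using ne_of_lt ha
  obtain ⟨B, hB𝓑, haB, hsub⟩ :=
    hB.exists_subset_of_mem_open hmem isClosed_singleton.isOpen_compl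
  refine ⟨B, fun z hz => ?_, hB.isOpen hB𝓑, haB⟩
  by_contra hzb
  exact hsub ((hconv B hB𝓑).out haB hz ⟨ha.le, not_lt.1 hzb⟩) rfl

/-- In a `T1` space with a basis of order-convex sets, upper rays are open. -/
theorem aux_isOpen_Ioi {X : Type u} [LinearOrder X] [TopologicalSpace X] [T1Space X]
    {𝓑 : Set (Set X)} (hB : IsTopologicalBasis 𝓑) (hconv : ∀ s ∈ 𝓑, s.OrdConnected)
    (b : X) : IsOpen (Set.Ioi b) := by
  rw [isOpen_iff_forall_mem_open]
  intro a ha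
  have hmem : a ∈ ({b}ᶜ : Set X) := by simpa using (ne_of_lt ha).symm
  obtain ⟨B, hB𝓑, haB, hsub⟩ :=
    hB.exists_subset_of_mem_open hmem isClosed_singleton.isOpen_compl
  refine ⟨B, fun z hz => ?_, hB.isOpen hB𝓑, haB⟩
  by_contra hzb
  exact hsub ((hconv B hB𝓑).out hz haB ⟨not_lt.1 hzb, ha.le⟩) rfl

/-- A subset of `μ.ord.ToType` of size `< μ` is strictly bounded, for regular `μ`. -/
theorem aux_bounded {μ : Cardinal.{u}} (hreg : μ.IsRegular)
    {S : Set μ.ord.ToType} (hS : #S < μ) : ∃ β, ∀ s ∈ S, s < β := by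
  have hwo : IsWellOrder μ.ord.ToType ((· < ·) : μ.ord.ToType → μ.ord.ToType → Prop) :=
    isWellOrder_lt
  have htype := Ordinal.type_toType μ.ord
  by_contra hc
  push_neg at hc
  have h := Order.cof_le (α := μ.ord.ToType) (s := S) hc
  rw [Ordinal.cof_toType, hreg.cof_ord] at h
  exact absurd hS (not_lt.2 h)

theorem aux_mk_Iio_lt {ν : Cardinal.{u}} (α : ν.ord.ToType) : #(Set.Iio α) < ν :=
  Cardinal.mk_Iio_ord_toType α

/-- Any nonempty subset of a linear order with no minimum admits a strictly decreasing
coinitial sequence indexed by (the order type of) a regular cardinal. -/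
theorem aux_exists_coinitial {X : Type u} [LinearOrder X] {R : Set X} (hne : R.Nonempty)
    (hnomin : ¬ ∃ m ∈ R, ∀ b ∈ R, m ≤ b) :
    ∃ μ : Cardinal.{u}, μ.IsRegular ∧
      ∃ q : μ.ord.ToType → X, StrictAnti q ∧ (∀ α, q α ∈ R) ∧ ∀ b ∈ R, ∃ α, q α ≤ b := by
  classical
  obtain ⟨b0, hb0⟩ := hne
  let q0 : Ordinal.{u} → X := Ordinal.lt_wf.fix
    (fun o ih => if h : ∃ b, b ∈ R ∧ ∀ o' (ho' : o' < o), b < ih o' ho' then h.choose else b0)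
  have hq0 : ∀ o : Ordinal.{u},
      q0 o = if h : ∃ b, b ∈ R ∧ ∀ o' (_ : o' < o), b < q0 o' then h.choose else b0 :=
    fun o => Ordinal.lt_wf.fix_eq _ o
  have hgood : ∀ o : Ordinal.{u}, (∃ b, b ∈ R ∧ ∀ o' (_ : o' < o), b < q0 o') →
      q0 o ∈ R ∧ ∀ o' < o, q0 o < q0 o' := by
    intro o h
    have heq : q0 o = h.choose := by rw [hq0 o, dif_pos h]
    rw [heq]
    exact ⟨h.choose_spec.1, fun o' ho' => h.choose_spec.2 o' ho'⟩
  have hbad : ∃ o : Ordinal.{u}, ¬ ∃ b, b ∈ R ∧ ∀ o' (_ : o' < o), b < q0 o' := by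
    by_contra hall
    push_neg at hall
    have hstrict : ∀ o' o : Ordinal.{u}, o' < o → q0 o < q0 o' := fun o' o h =>
      (hgood o (hall o)).2 o' h
    have hinj : Function.Injective fun α : (Order.succ #X).ord.ToType =>
        q0 (((Ordinal.ToType.mk (o := (Order.succ #X).ord))).symm α).1 := by
      intro a b hab
      rcases lt_trichotomy a b with h | h | h
      · have h1 : (((Ordinal.ToType.mk (o := (Order.succ #X).ord))).symm a).1 <
            (((Ordinal.ToType.mk (o := (Order.succ #X).ord))).symm b).1 :=
          Subtype.coe_lt_coe.2 (((Ordinal.ToType.mk (o := (Order.succ #X).ord))).symm.lt_iff_lt.2 h)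
        exact absurd hab (ne_of_gt (hstrict _ _ h1))
      · exact h
      · have h1 : (((Ordinal.ToType.mk (o := (Order.succ #X).ord))).symm b).1 <
            (((Ordinal.ToType.mk (o := (Order.succ #X).ord))).symm a).1 :=
          Subtype.coe_lt_coe.2 (((Ordinal.ToType.mk (o := (Order.succ #X).ord))).symm.lt_iff_lt.2 h)
        exact absurd hab (ne_of_lt (hstrict _ _ h1))
    have hle := Cardinal.mk_le_of_injective hinj
    rw [Cardinal.mk_ord_toType] at hle
    exact absurd hle (not_le.2 (Order.lt_succ #X))
  set δ := sInf {o : Ordinal.{u} | ¬ ∃ b, b ∈ R ∧ ∀ o' (_ : o' < o), b < q0 o'} with hδdef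
  have hδ : ¬ ∃ b, b ∈ R ∧ ∀ o' (_ : o' < δ), b < q0 o' := csInf_mem hbad
  have hlt : ∀ o < δ, ∃ b, b ∈ R ∧ ∀ o' (_ : o' < o), b < q0 o' := by
    intro o ho
    by_contra h
    have hge : δ ≤ o := csInf_le' h
    exact absurd ho (not_lt.2 hge)
  have hmemR : ∀ o < δ, q0 o ∈ R := fun o ho => (hgood o (hlt o ho)).1
  have hdec : ∀ o' o, o' < o → o < δ → q0 o < q0 o' := fun o' o h ho =>
    (hgood o (hlt o ho)).2 o' h
  have hcoi : ∀ b ∈ R, ∃ o < δ, q0 o ≤ b := by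
    intro b hb
    by_contra h
    push_neg at h
    exact hδ ⟨b, hb, fun o' ho' => h o' ho'⟩
  have hδ0 : δ ≠ 0 := by
    intro h
    exact hδ ⟨b0, hb0, fun o' ho' => absurd (h ▸ ho') (by simp)⟩
  have hδlim : Order.IsSuccLimit δ := by
    refine Ordinal.isSuccLimit_iff.2 ⟨hδ0, Order.isSuccPrelimit_of_succ_lt fun a ha => ?_⟩
    by_contra h
    push_neg at h
    have hδeq : δ = Order.succ a := le_antisymm h (Order.succ_le_of_lt ha)
    obtain ⟨b, hbR, hba⟩ : ∃ b ∈ R, b < q0 a := by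
      by_contra hc
      push_neg at hc
      exact hnomin ⟨q0 a, hmemR a ha, hc⟩
    refine hδ ⟨b, hbR, fun o' ho' => ?_⟩
    rw [hδeq] at ho'
    rcases lt_or_eq_of_le (Order.lt_succ_iff.1 ho') with h' | h'
    · exact hba.trans (hdec o' a h' ha)
    · rw [h']; exact hba
  have hreg : δ.cof.IsRegular := ⟨Ordinal.aleph0_le_cof.2 hδlim, (Ordinal.cof_cof δ).ge⟩
  obtain ⟨f, hf⟩ := Ordinal.exists_fundamental_sequence δ
  refine ⟨δ.cof, hreg,
    fun α => q0 (f (((Ordinal.ToType.mk (o := δ.cof.ord))).symm α).1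
      (((Ordinal.ToType.mk (o := δ.cof.ord))).symm α).2), ?_, ?_, ?_⟩
  · intro α β hab
    have h1 : (((Ordinal.ToType.mk (o := δ.cof.ord))).symm α).1 <
        (((Ordinal.ToType.mk (o := δ.cof.ord))).symm β).1 :=
      Subtype.coe_lt_coe.2 (((Ordinal.ToType.mk (o := δ.cof.ord))).symm.lt_iff_lt.2 hab)
    exact hdec _ _ (hf.strict_mono _ _ h1) (hf.lt _)
  · intro α
    exact hmemR _ (hf.lt _)
  · intro b hb
    obtain ⟨o, hoδ, hob⟩ := hcoi b hb
    have hoblsub : o < Ordinal.blsub _ f := by rw [hf.blsub_eq]; exact hoδ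
    obtain ⟨i, hi, hoi⟩ := Ordinal.lt_blsub_iff.1 hoblsub
    refine ⟨(Ordinal.ToType.mk (o := δ.cof.ord)) ⟨i, hi⟩, ?_⟩
    have hsymm : ((Ordinal.ToType.mk (o := δ.cof.ord))).symm
        ((Ordinal.ToType.mk (o := δ.cof.ord)) ⟨i, hi⟩) = ⟨i, hi⟩ :=
      OrderIso.symm_apply_apply _ _
    show q0 (f (((Ordinal.ToType.mk (o := δ.cof.ord))).symm
        ((Ordinal.ToType.mk (o := δ.cof.ord)) ⟨i, hi⟩)).1
      (((Ordinal.ToType.mk (o := δ.cof.ord))).symm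
        ((Ordinal.ToType.mk (o := δ.cof.ord)) ⟨i, hi⟩)).2) ≤ b
    rw [hsymm]
    rcases lt_or_eq_of_le hoi with h' | h'
    · exact le_of_lt ((hdec _ _ h' (hf.lt _)).trans_le hob)
    · rw [← h']
      exact hob

/-- Decomposability of `D` at the regular length of a coinitial decreasing sequence that the
`D`-limit approaches from above. -/
theorem aux_decomposable {X : Type u} [LinearOrder X] {I : Type u} (D : Ultrafilter I)
    (x : I → X) {R : Set X} {μ : Cardinal.{u}} (hreg : μ.IsRegular)
    (q : μ.ord.ToType → X) (hanti : StrictAnti q)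
    (hco : ∀ b ∈ R, ∃ α, q α ≤ b)
    (hT : {i | x i ∈ R} ∈ D) (hlt : ∀ α, {i | x i < q α} ∈ D) :
    Decomposable D μ := by
  classical
  have hne : Nonempty μ.ord.ToType :=
    Ordinal.toType_nonempty_iff_ne_zero.2 (Cardinal.isSuccLimit_ord hreg.1).pos.ne'
  obtain ⟨α₀⟩ := hne
  refine ⟨fun i => if h : ∃ α, q α ≤ x i then h.choose else α₀, fun S hS hgS => ?_⟩
  set g : I → μ.ord.ToType := fun i => if h : ∃ α, q α ≤ x i then h.choose else α₀ with hgdef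
  obtain ⟨β, hβ⟩ := aux_bounded hreg hS
  have hTβ : {i | x i ∈ R} ∩ {i | x i < q β} ∈ D := Filter.inter_mem hT (hlt β)
  have hdisj : (g ⁻¹' S ∩ ({i | x i ∈ R} ∩ {i | x i < q β})) = ∅ := by
    ext i
    simp only [Set.mem_inter_iff, Set.mem_preimage, Set.mem_setOf_eq, Set.mem_empty_iff_false,
      iff_false, not_and]
    intro hgi hiR hiβ
    have hex : ∃ α, q α ≤ x i := hco _ hiR
    have hqg : q (g i) ≤ x i := by
      simp only [g, dif_pos hex]
      exact hex.choose_spec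
    have h1 : β < g i := by
      by_contra hc
      exact absurd (le_trans (hanti.antitone (not_lt.1 hc)) hqg) (not_le.2 hiβ)
    exact lt_irrefl _ (h1.trans (hβ _ hgi))
  have : g ⁻¹' S ∩ ({i | x i ∈ R} ∩ {i | x i < q β}) ∈ D := Filter.inter_mem hgS hTβ
  exact (Filter.nonempty_of_mem this).ne_empty hdisj

theorem aux_decomposable_L {X : Type u} [LinearOrder X] {I : Type u} (D : Ultrafilter I)
    (x : I → X) {L : Set X} {μ : Cardinal.{u}} (hreg : μ.IsRegular)
    (q : μ.ord.ToType → X) (hmono : StrictMono q)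
    (hco : ∀ a ∈ L, ∃ α, a ≤ q α)
    (hT : {i | x i ∈ L} ∈ D) (hlt : ∀ α, {i | q α < x i} ∈ D) :
    Decomposable D μ := by
  classical
  have hne : Nonempty μ.ord.ToType :=
    Ordinal.toType_nonempty_iff_ne_zero.2 (Cardinal.isSuccLimit_ord hreg.1).pos.ne'
  obtain ⟨α₀⟩ := hne
  refine ⟨fun i => if h : ∃ α, x i ≤ q α then h.choose else α₀, fun S hS hgS => ?_⟩
  set g : I → μ.ord.ToType := fun i => if h : ∃ α, x i ≤ q α then h.choose else α₀ with hgdef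
  obtain ⟨β, hβ⟩ := aux_bounded hreg hS
  have hTβ : {i | x i ∈ L} ∩ {i | q β < x i} ∈ D := Filter.inter_mem hT (hlt β)
  have hdisj : (g ⁻¹' S ∩ ({i | x i ∈ L} ∩ {i | q β < x i})) = ∅ := by
    ext i
    simp only [Set.mem_inter_iff, Set.mem_preimage, Set.mem_setOf_eq, Set.mem_empty_iff_false,
      iff_false, not_and]
    intro hgi hiL hiβ
    have hex : ∃ α, x i ≤ q α := hco _ hiL
    have hqg : x i ≤ q (g i) := by
      simp only [g, dif_pos hex]
      exact hex.choose_spec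
    have h1 : β < g i := by
      by_contra hc
      exact absurd (le_trans hqg (hmono.monotone (not_lt.1 hc))) (not_le.2 hiβ)
    exact lt_irrefl _ (h1.trans (hβ _ hgi))
  have : g ⁻¹' S ∩ ({i | x i ∈ L} ∩ {i | q β < x i}) ∈ D := Filter.inter_mem hgS hTβ
  exact (Filter.nonempty_of_mem this).ne_empty hdisj

theorem aux_not_compact_R {X : Type u} [LinearOrder X] [TopologicalSpace X]
    {R : Set X} {μ : Cardinal.{u}} (hreg : μ.IsRegular)
    (q : μ.ord.ToType → X) (hanti : StrictAnti q) (hmem : ∀ α, q α ∈ R)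
    (hco : ∀ b ∈ R, ∃ α, q α ≤ b)
    (hup : ∀ b ∈ R, ∀ c, b ≤ c → c ∈ R)
    (hopenc : IsOpen Rᶜ) (hIoi : ∀ a : X, IsOpen (Set.Ioi a)) :
    ¬ NuNuCompact X μ := by
  intro hcpt
  haveI hnomax : NoMaxOrder μ.ord.ToType := Cardinal.noMaxOrder hreg.1
  set 𝒰 : Set (Set X) := insert Rᶜ (Set.range fun α => Set.Ioi (q α)) with h𝒰
  have hopen : ∀ U ∈ 𝒰, IsOpen U := by
    intro U hU
    rcases Set.mem_insert_iff.1 hU with rfl | hU'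
    · exact hopenc
    · obtain ⟨α, rfl⟩ := hU'
      exact hIoi _
  have hcover : ⋃₀ 𝒰 = Set.univ := by
    ext z
    simp only [Set.mem_sUnion, Set.mem_univ, iff_true]
    by_cases hz : z ∈ R
    · obtain ⟨α, hα⟩ := hco z hz
      obtain ⟨β, hβ⟩ := exists_gt α
      exact ⟨Set.Ioi (q β), Set.mem_insert_of_mem _ ⟨β, rfl⟩, lt_of_lt_of_le (hanti hβ) hα⟩
    · exact ⟨Rᶜ, Set.mem_insert _ _, hz⟩
  have hcard : #𝒰 ≤ μ := by
    refine le_trans Cardinal.mk_insert_le ?_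
    have h1 : #(Set.range fun α : μ.ord.ToType => Set.Ioi (q α)) ≤ μ := by
      refine le_trans Cardinal.mk_range_le ?_
      rw [Cardinal.mk_ord_toType]
    exact le_trans (add_le_add_left h1 1) (le_of_eq (Cardinal.add_one_eq hreg.1))
  obtain ⟨𝒱, h𝒱𝒰, h𝒱card, h𝒱cover⟩ := hcpt 𝒰 hopen hcover hcard
  set A : Set μ.ord.ToType := {α | Set.Ioi (q α) ∈ 𝒱} with hA
  have hAcard : #A < μ := by
    refine lt_of_le_of_lt ?_ h𝒱card
    have hinj : Function.Injective fun α : A => (⟨Set.Ioi (q α.1), α.2⟩ : 𝒱) := by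
      intro a b hab
      have heq : Set.Ioi (q a.1) = Set.Ioi (q b.1) := congrArg Subtype.val hab
      have hq : q a.1 = q b.1 := by
        by_contra hne'
        rcases Ne.lt_or_gt hne' with h | h
        · have : q b.1 ∈ Set.Ioi (q a.1) := h
          rw [heq] at this
          exact lt_irrefl _ this
        · have : q a.1 ∈ Set.Ioi (q b.1) := h
          rw [← heq] at this
          exact lt_irrefl _ this
      exact Subtype.ext (hanti.injective hq)
    exact Cardinal.mk_le_of_injective hinj
  obtain ⟨β, hβ⟩ := aux_bounded hreg hAcard
  have hqβ : q β ∈ ⋃₀ 𝒱 := by rw [h𝒱cover]; trivial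
  obtain ⟨V, hV, hqV⟩ := hqβ
  rcases Set.mem_insert_iff.1 (h𝒱𝒰 hV) with rfl | hV'
  · exact hqV (hmem β)
  · obtain ⟨α, rfl⟩ := hV'
    have hαA : α ∈ A := hV
    have h1 : α < β := hβ α hαA
    have h2 : q α < q β := hqV
    exact absurd (hanti h1) (not_lt.2 h2.le)

theorem aux_not_compact_L {X : Type u} [LinearOrder X] [TopologicalSpace X]
    {L : Set X} {μ : Cardinal.{u}} (hreg : μ.IsRegular)
    (q : μ.ord.ToType → X) (hmono : StrictMono q) (hmem : ∀ α, q α ∈ L)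
    (hco : ∀ a ∈ L, ∃ α, a ≤ q α)
    (hdown : ∀ a ∈ L, ∀ c, c ≤ a → c ∈ L)
    (hopenc : IsOpen Lᶜ) (hIio : ∀ a : X, IsOpen (Set.Iio a)) :
    ¬ NuNuCompact X μ := by
  intro hcpt
  haveI hnomax : NoMaxOrder μ.ord.ToType := Cardinal.noMaxOrder hreg.1
  set 𝒰 : Set (Set X) := insert Lᶜ (Set.range fun α => Set.Iio (q α)) with h𝒰
  have hopen : ∀ U ∈ 𝒰, IsOpen U := by
    intro U hU
    rcases Set.mem_insert_iff.1 hU with rfl | hU'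
    · exact hopenc
    · obtain ⟨α, rfl⟩ := hU'
      exact hIio _
  have hcover : ⋃₀ 𝒰 = Set.univ := by
    ext z
    simp only [Set.mem_sUnion, Set.mem_univ, iff_true]
    by_cases hz : z ∈ L
    · obtain ⟨α, hα⟩ := hco z hz
      obtain ⟨β, hβ⟩ := exists_gt α
      exact ⟨Set.Iio (q β), Set.mem_insert_of_mem _ ⟨β, rfl⟩, lt_of_le_of_lt hα (hmono hβ)⟩
    · exact ⟨Lᶜ, Set.mem_insert _ _, hz⟩
  have hcard : #𝒰 ≤ μ := by
    refine le_trans Cardinal.mk_insert_le ?_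
    have h1 : #(Set.range fun α : μ.ord.ToType => Set.Iio (q α)) ≤ μ := by
      refine le_trans Cardinal.mk_range_le ?_
      rw [Cardinal.mk_ord_toType]
    exact le_trans (add_le_add_left h1 1) (le_of_eq (Cardinal.add_one_eq hreg.1))
  obtain ⟨𝒱, h𝒱𝒰, h𝒱card, h𝒱cover⟩ := hcpt 𝒰 hopen hcover hcard
  set A : Set μ.ord.ToType := {α | Set.Iio (q α) ∈ 𝒱} with hA
  have hAcard : #A < μ := by
    refine lt_of_le_of_lt ?_ h𝒱card
    have hinj : Function.Injective fun α : A => (⟨Set.Iio (q α.1), α.2⟩ : 𝒱) := by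
      intro a b hab
      have heq : Set.Iio (q a.1) = Set.Iio (q b.1) := congrArg Subtype.val hab
      have hq : q a.1 = q b.1 := by
        by_contra hne'
        rcases Ne.lt_or_gt hne' with h | h
        · have : q a.1 ∈ Set.Iio (q b.1) := h
          rw [← heq] at this
          exact lt_irrefl _ this
        · have : q b.1 ∈ Set.Iio (q a.1) := h
          rw [heq] at this
          exact lt_irrefl _ this
      exact Subtype.ext (hmono.injective hq)
    exact Cardinal.mk_le_of_injective hinj
  obtain ⟨β, hβ⟩ := aux_bounded hreg hAcard
  have hqβ : q β ∈ ⋃₀ 𝒱 := by rw [h𝒱cover]; trivial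
  obtain ⟨V, hV, hqV⟩ := hqβ
  rcases Set.mem_insert_iff.1 (h𝒱𝒰 hV) with rfl | hV'
  · exact hqV (hmem β)
  · obtain ⟨α, rfl⟩ := hV'
    have hαA : α ∈ A := hV
    have h1 : α < β := hβ α hαA
    have h2 : q β < q α := hqV
    exact absurd (hmono h1) (not_lt.2 h2.le)

theorem aux_exists_cofinal {X : Type u} [LinearOrder X] {L : Set X} (hne : L.Nonempty)
    (hnomax : ¬ ∃ m ∈ L, ∀ a ∈ L, a ≤ m) :
    ∃ μ : Cardinal.{u}, μ.IsRegular ∧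
      ∃ q : μ.ord.ToType → X, StrictMono q ∧ (∀ α, q α ∈ L) ∧ ∀ a ∈ L, ∃ α, a ≤ q α := by
  have hne' : (OrderDual.ofDual ⁻¹' L : Set Xᵒᵈ).Nonempty := ⟨OrderDual.toDual hne.choose,
    hne.choose_spec⟩
  have hnomin' : ¬ ∃ m ∈ (OrderDual.ofDual ⁻¹' L : Set Xᵒᵈ),
      ∀ b ∈ (OrderDual.ofDual ⁻¹' L : Set Xᵒᵈ), m ≤ b := by
    rintro ⟨m, hm, hmin⟩
    exact hnomax ⟨OrderDual.ofDual m, hm, fun a ha => hmin (OrderDual.toDual a) ha⟩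
  obtain ⟨μ, hreg, q, hanti, hmem, hco⟩ := aux_exists_coinitial hne' hnomin'
  refine ⟨μ, hreg, fun α => OrderDual.ofDual (q α), fun α β h => hanti h, hmem,
    fun a ha => ?_⟩
  obtain ⟨α, hα⟩ := hco (OrderDual.toDual a) ha
  exact ⟨α, hα⟩

theorem aux_branchR {X : Type u} [LinearOrder X] [TopologicalSpace X] {I : Type u}
    (D : Ultrafilter I) (x : I → X)
    (hcpt : ∀ μ : Cardinal.{u}, μ.IsRegular → Decomposable D μ → NuNuCompact X μ)
    {R : Set X} (hne : R.Nonempty) (hnomin : ¬ ∃ m ∈ R, ∀ b ∈ R, m ≤ b)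
    (hup : ∀ b ∈ R, ∀ c, b ≤ c → c ∈ R) (hopenc : IsOpen Rᶜ)
    (hT : {i | x i ∈ R} ∈ D) (hlt : ∀ b ∈ R, {i | x i < b} ∈ D)
    (hIoi : ∀ a : X, IsOpen (Set.Ioi a)) : False := by
  obtain ⟨μ, hreg, q, hanti, hmem, hco⟩ := aux_exists_coinitial hne hnomin
  have hdec := aux_decomposable D x hreg q hanti hco hT fun α => hlt _ (hmem α)
  exact aux_not_compact_R hreg q hanti hmem hco hup hopenc hIoi (hcpt μ hreg hdec)

theorem aux_branchL {X : Type u} [LinearOrder X] [TopologicalSpace X] {I : Type u}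
    (D : Ultrafilter I) (x : I → X)
    (hcpt : ∀ μ : Cardinal.{u}, μ.IsRegular → Decomposable D μ → NuNuCompact X μ)
    {L : Set X} (hne : L.Nonempty) (hnomax : ¬ ∃ m ∈ L, ∀ a ∈ L, a ≤ m)
    (hdown : ∀ a ∈ L, ∀ c, c ≤ a → c ∈ L) (hopenc : IsOpen Lᶜ)
    (hT : {i | x i ∈ L} ∈ D) (hlt : ∀ a ∈ L, {i | a < x i} ∈ D)
    (hIio : ∀ a : X, IsOpen (Set.Iio a)) : False := by
  obtain ⟨μ, hreg, q, hmono, hmem, hco⟩ := aux_exists_cofinal hne hnomax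
  have hdec := aux_decomposable_L D x hreg q hmono hco hT fun α => hlt _ (hmem α)
  exact aux_not_compact_L hreg q hmono hmem hco hdown hopenc hIio (hcpt μ hreg hdec)

end Aux

section Aux2

open Ordinal

theorem aux_nuNu_of_DCompact {X : Type u} [TopologicalSpace X] {I : Type u} {D : Ultrafilter I}
    {ν : Cardinal.{u}} (hν : ℵ₀ ≤ ν) (hdec : Decomposable D ν)
    (hcpt : DCompact D X) : NuNuCompact X ν := by
  classical
  intro 𝒰 hopen hcover hcard
  by_contra hno
  push_neg at hno
  haveI hnomax : NoMaxOrder ν.ord.ToType := Cardinal.noMaxOrder hν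
  have hle : #𝒰 ≤ #(ν.ord.ToType) := by rwa [Cardinal.mk_ord_toType]
  obtain ⟨f⟩ := (Cardinal.le_def _ _).1 hle
  have hpt : ∀ α : ν.ord.ToType, ∃ z : X, z ∉ ⋃₀ {U | ∃ h : U ∈ 𝒰, f ⟨U, h⟩ < α} := by
    intro α
    have hsub : {U | ∃ h : U ∈ 𝒰, f ⟨U, h⟩ < α} ⊆ 𝒰 := by
      intro U hU
      obtain ⟨h, _⟩ := hU
      exact h
    have hlt' : #{U | ∃ h : U ∈ 𝒰, f ⟨U, h⟩ < α} < ν := by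
      refine lt_of_le_of_lt ?_ (aux_mk_Iio_lt α)
      refine Cardinal.mk_le_of_injective (f := fun U : {U // ∃ h : U ∈ 𝒰, f ⟨U, h⟩ < α} =>
        (⟨f ⟨U.1, U.2.choose⟩, U.2.choose_spec⟩ : Set.Iio α)) ?_
      intro U V hUV
      have h1 := congrArg Subtype.val hUV
      have h2 := f.injective h1
      have h3 := congrArg Subtype.val h2
      exact Subtype.ext h3
    by_contra hz
    push_neg at hz
    exact hno _ hsub hlt' (Set.eq_univ_of_forall hz)
  choose pt hpt' using hpt
  obtain ⟨h, hh⟩ := hdec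
  obtain ⟨p, hp⟩ := hcpt fun i => pt (h i)
  have hpmem : p ∈ ⋃₀ 𝒰 := by rw [hcover]; trivial
  obtain ⟨U₀, hU₀, hpU₀⟩ := hpmem
  have hA : {i | pt (h i) ∈ U₀} ∈ D := hp U₀ (hopen _ hU₀) hpU₀
  obtain ⟨β, hβ⟩ := exists_gt (f ⟨U₀, hU₀⟩)
  have hsubset : {i | pt (h i) ∈ U₀} ⊆ h ⁻¹' Set.Iio β := by
    intro i hi
    simp only [Set.mem_preimage, Set.mem_Iio]
    by_contra hc
    push_neg at hc
    have hflt : f ⟨U₀, hU₀⟩ < h i := lt_of_lt_of_le hβ hc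
    exact hpt' (h i) ⟨U₀, ⟨hU₀, hflt⟩, hi⟩
  exact hh _ (aux_mk_Iio_lt β) (Filter.mem_of_superset hA hsubset)

theorem aux_dcompact_pi {I : Type u} {D : Ultrafilter I} {J : Type u} {X : J → Type u}
    [∀ j, TopologicalSpace (X j)] (h : ∀ j, DCompact D (X j)) : DCompact D (∀ j, X j) := by
  intro x
  have hj := fun j => h j fun i => x i j
  choose p hp using hj
  refine ⟨p, fun U hU hpU => ?_⟩
  have htend : Filter.Tendsto x (D : Filter I) (nhds p) := by
    rw [tendsto_pi_nhds]
    intro j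
    rw [Filter.tendsto_def]
    intro s hs
    obtain ⟨V, hVs, hVopen, hpV⟩ := mem_nhds_iff.1 hs
    exact Filter.mem_of_superset (hp j V hVopen hpV) fun i hi => hVs hi
  exact Filter.tendsto_def.1 htend U (hU.mem_nhds hpU)

theorem aux_dcompact_GO {X : Type u} [LinearOrder X] [TopologicalSpace X] [T2Space X]
    {𝓑 : Set (Set X)} (hB : IsTopologicalBasis 𝓑) (hconv : ∀ s ∈ 𝓑, s.OrdConnected)
    {I : Type u} (D : Ultrafilter I)
    (hcpt : ∀ μ : Cardinal.{u}, μ.IsRegular → Decomposable D μ → NuNuCompact X μ) :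
    DCompact D X := by
  classical
  intro x
  by_cases hEq : ∃ a : X, {i | x i = a} ∈ D
  · obtain ⟨a, ha⟩ := hEq
    refine ⟨a, fun U _ haU => Filter.mem_of_superset ha fun i hi => ?_⟩
    simp only [Set.mem_setOf_eq] at hi ⊢
    rw [hi]
    exact haU
  push_neg at hEq
  have hIoi : ∀ a : X, IsOpen (Set.Ioi a) := aux_isOpen_Ioi hB hconv
  have hIio : ∀ a : X, IsOpen (Set.Iio a) := aux_isOpen_Iio hB hconv
  set L : Set X := {a | {i | a < x i} ∈ D} with hLdef
  set R : Set X := {b | {i | x i < b} ∈ D} with hRdef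
  have hLR : ∀ a : X, a ∈ L ∨ a ∈ R := by
    intro a
    by_contra hc
    push_neg at hc
    obtain ⟨hcL, hcR⟩ := hc
    have h1 : {i | a < x i}ᶜ ∈ D := Ultrafilter.compl_mem_iff_notMem.2 hcL
    have h2 : {i | x i < a}ᶜ ∈ D := Ultrafilter.compl_mem_iff_notMem.2 hcR
    refine hEq a (Filter.mem_of_superset (Filter.inter_mem h1 h2) ?_)
    rintro i ⟨hi1, hi2⟩
    exact le_antisymm (not_lt.1 hi1) (not_lt.1 hi2)
  have hdisj : ∀ a : X, a ∈ L → a ∈ R → False := by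
    intro a haL haR
    obtain ⟨i, hi1, hi2⟩ := Filter.nonempty_of_mem (Filter.inter_mem haL haR)
    exact absurd (hi1.trans hi2) (lt_irrefl _)
  have hLdown : ∀ a ∈ L, ∀ c, c ≤ a → c ∈ L := fun a ha c hca =>
    Filter.mem_of_superset ha fun i hi => lt_of_le_of_lt hca hi
  have hRup : ∀ b ∈ R, ∀ c, b ≤ c → c ∈ R := fun b hb c hbc =>
    Filter.mem_of_superset hb fun i hi => lt_of_lt_of_le hi hbc
  have hsand : ∀ a ∈ L, ∀ b ∈ R, ∃ i, a < x i ∧ x i < b := fun a ha b hb =>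
    Filter.nonempty_of_mem (Filter.inter_mem ha hb)
  by_cases hmaxL : ∃ p ∈ L, ∀ a ∈ L, a ≤ p
  · obtain ⟨p, hpL, hpmax⟩ := hmaxL
    have hRIoi : R = Set.Ioi p := by
      ext z
      constructor
      · intro hz
        by_contra hc
        exact hdisj z (hLdown p hpL z (not_lt.1 hc)) hz
      · intro hz
        rcases hLR z with h | h
        · exact absurd (hpmax z h) (not_le.2 hz)
        · exact h
    have hRne : R.Nonempty := by
      obtain ⟨i, hi⟩ := Filter.nonempty_of_mem hpL
      refine ⟨x i, ?_⟩
      rw [hRIoi]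
      exact hi
    have hRnomin : ¬ ∃ m ∈ R, ∀ b ∈ R, m ≤ b := by
      rintro ⟨m, hm, hmin⟩
      obtain ⟨i, hi1, hi2⟩ := hsand p hpL m hm
      have hxiR : x i ∈ R := by rw [hRIoi]; exact hi1
      exact absurd (hmin _ hxiR) (not_le.2 hi2)
    by_cases hlim : ∀ U : Set X, IsOpen U → p ∈ U → {i | x i ∈ U} ∈ D
    · exact ⟨p, hlim⟩
    · push_neg at hlim
      obtain ⟨U, hUopen, hpU, hUD⟩ := hlim
      obtain ⟨B, hB𝓑, hpB, hBU⟩ := hB.exists_subset_of_mem_open hpU hUopen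
      have hBL : B ⊆ Set.Iic p := by
        intro z hzB
        by_contra hzp
        have hzR : z ∈ R := by rw [hRIoi]; exact not_le.1 hzp
        refine hUD (Filter.mem_of_superset (Filter.inter_mem hpL hzR) ?_)
        rintro i ⟨hi1, hi2⟩
        exact hBU ((hconv B hB𝓑).out hpB hzB ⟨le_of_lt hi1, le_of_lt hi2⟩)
      have hopenc : IsOpen Rᶜ := by
        have hc : Rᶜ = Set.Iio p ∪ B := by
          rw [hRIoi, Set.compl_Ioi]
          apply Set.Subset.antisymm
          · intro z hz
            rcases lt_or_eq_of_le hz with h | h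
            · exact Or.inl h
            · exact Or.inr (by rw [h]; exact hpB)
          · rintro z (hz | hz)
            · exact le_of_lt hz
            · exact hBL hz
        rw [hc]
        exact (hIio p).union (hB.isOpen hB𝓑)
      have hT : {i | x i ∈ R} ∈ D := by
        have : {i | x i ∈ R} = {i | p < x i} := by
          ext i
          rw [hRIoi]
          rfl
        rw [this]
        exact hpL
      exact (aux_branchR D x hcpt hRne hRnomin hRup hopenc hT (fun b hb => hb) hIoi).elim
  · by_cases hminR : ∃ m ∈ R, ∀ b ∈ R, m ≤ b
    · obtain ⟨m, hmR, hmin⟩ := hminR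
      have hLIio : L = Set.Iio m := by
        ext z
        constructor
        · intro hz
          by_contra hc
          exact hdisj z hz (hRup m hmR z (not_lt.1 hc))
        · intro hz
          rcases hLR z with h | h
          · exact h
          · exact absurd (hmin z h) (not_le.2 hz)
      have hLne : L.Nonempty := by
        obtain ⟨i, hi⟩ := Filter.nonempty_of_mem hmR
        refine ⟨x i, ?_⟩
        rw [hLIio]
        exact hi
      by_cases hlim : ∀ U : Set X, IsOpen U → m ∈ U → {i | x i ∈ U} ∈ D
      · exact ⟨m, hlim⟩
      · push_neg at hlim
        obtain ⟨U, hUopen, hmU, hUD⟩ := hlim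
        obtain ⟨B, hB𝓑, hmB, hBU⟩ := hB.exists_subset_of_mem_open hmU hUopen
        have hBR : B ⊆ Set.Ici m := by
          intro z hzB
          by_contra hzm
          have hzL : z ∈ L := by rw [hLIio]; exact not_le.1 hzm
          refine hUD (Filter.mem_of_superset (Filter.inter_mem hzL hmR) ?_)
          rintro i ⟨hi1, hi2⟩
          exact hBU ((hconv B hB𝓑).out hzB hmB ⟨le_of_lt hi1, le_of_lt hi2⟩)
        have hopenc : IsOpen Lᶜ := by
          have hc : Lᶜ = Set.Ioi m ∪ B := by
            rw [hLIio, Set.compl_Iio]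
            apply Set.Subset.antisymm
            · intro z hz
              rcases lt_or_eq_of_le hz with h | h
              · exact Or.inl h
              · exact Or.inr (by rw [← h]; exact hmB)
            · rintro z (hz | hz)
              · exact le_of_lt hz
              · exact hBR hz
          rw [hc]
          exact (hIoi m).union (hB.isOpen hB𝓑)
        have hT : {i | x i ∈ L} ∈ D := by
          have : {i | x i ∈ L} = {i | x i < m} := by
            ext i
            rw [hLIio]
            rfl
          rw [this]
          exact hmR
        exact (aux_branchL D x hcpt hLne hmaxL hLdown hopenc hT (fun a ha => ha) hIio).elim
    · have hRopen : IsOpen R := by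
        rw [isOpen_iff_forall_mem_open]
        intro z hz
        obtain ⟨b, hbR, hbz⟩ : ∃ b ∈ R, b < z := by
          by_contra hcon
          push_neg at hcon
          exact hminR ⟨z, hz, hcon⟩
        exact ⟨Set.Ioi b, fun w hw => hRup b hbR w (le_of_lt hw), hIoi b, hbz⟩
      have hLopen : IsOpen L := by
        rw [isOpen_iff_forall_mem_open]
        intro z hz
        obtain ⟨a, haL, hza⟩ : ∃ a ∈ L, z < a := by
          by_contra hcon
          push_neg at hcon
          exact hmaxL ⟨z, hz, hcon⟩
        exact ⟨Set.Iio a, fun w hw => hLdown a haL w (le_of_lt hw), hIio a, hza⟩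
      have hTor : {i | x i ∈ L} ∈ D ∨ {i | x i ∈ R} ∈ D := by
        rw [← Ultrafilter.union_mem_iff]
        refine Filter.mem_of_superset Filter.univ_mem ?_
        intro i _
        rcases hLR (x i) with h | h
        · exact Or.inl h
        · exact Or.inr h
      have hcomplL : Lᶜ = R := by
        ext z
        simp only [Set.mem_compl_iff]
        constructor
        · intro hzc
          rcases hLR z with h | h
          · exact absurd h hzc
          · exact h
        · intro h hL
          exact hdisj z hL h
      have hcomplR : Rᶜ = L := by
        ext z
        simp only [Set.mem_compl_iff]
        constructor
        · intro hzc
          rcases hLR z with h | h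
          · exact h
          · exact absurd h hzc
        · intro h hR
          exact hdisj z h hR
      rcases hTor with hTL | hTR
      · have hLne : L.Nonempty := by
          obtain ⟨i, hi⟩ := Filter.nonempty_of_mem hTL
          exact ⟨x i, hi⟩
        have hopenc : IsOpen Lᶜ := by rw [hcomplL]; exact hRopen
        exact (aux_branchL D x hcpt hLne hmaxL hLdown hopenc hTL (fun a ha => ha) hIio).elim
      · have hRne : R.Nonempty := by
          obtain ⟨i, hi⟩ := Filter.nonempty_of_mem hTR
          exact ⟨x i, hi⟩
        have hopenc : IsOpen Rᶜ := by rw [hcomplR]; exact hLopen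
        exact (aux_branchR D x hcpt hRne hminR hRup hopenc hTR (fun b hb => hb) hIoi).elim

end Aux2

/-- If for every `ν ∈ H` there is an ultrafilter `D_ν` which is `ν`-decomposable and all of
whose infinite regular decomposability cardinals lie in `H`, then any product of
`H`-compact GO spaces is `H`-compact. -/
theorem stmt12 (H : Set Cardinal.{u}) (hH : ∀ ν ∈ H, ν.IsRegular)
    (hD : ∀ ν ∈ H, ∃ (I : Type u) (D : Ultrafilter I), Decomposable D ν ∧
      ∀ μ : Cardinal.{u}, ℵ₀ ≤ μ → μ.IsRegular → Decomposable D μ → μ ∈ H)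
    (J : Type u) (X : J → Type u) [∀ j, LinearOrder (X j)] [∀ j, TopologicalSpace (X j)]
    [∀ j, T2Space (X j)] (hne : ∀ j, Nonempty (X j))
    (hGO : ∀ j, ∃ 𝓑 : Set (Set (X j)), IsTopologicalBasis 𝓑 ∧ ∀ s ∈ 𝓑, s.OrdConnected)
    (hcpt : ∀ j, ∀ ν ∈ H, NuNuCompact (X j) ν) :
    ∀ ν ∈ H, NuNuCompact (∀ j, X j) ν := by
  intro ν hν
  obtain ⟨I, D, hdec, hspec⟩ := hD ν hν
  have hDc : ∀ j, DCompact D (X j) := by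
    intro j
    obtain ⟨𝓑, hB, hconv⟩ := hGO j
    exact aux_dcompact_GO hB hconv D fun μ hμreg hμdec =>
      hcpt j μ (hspec μ hμreg.1 hμreg hμdec)
  exact aux_nuNu_of_DCompact (hH ν hν).1 hdec (aux_dcompact_pi hDc)
end

section
/- Let λ be an infinite cardinal and let X be a GO space. Then X is initially λ-compact if and only if, for every infinite regular cardinal ν ≤ λ, every strictly increasing ν-indexed sequence of elements of X has a supremum to which it converges, and every strictly decreasing ν-indexed sequence of elements of X has an infimum to which it converges. -/
universe u v

open Set Cardinal Filter Topology TopologicalSpace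

namespace Stmt13Aux

/-- Unbounded (cofinal) set of indices. -/
def Unb {ι : Type u} [LT ι] (S : Set ι) : Prop := ∀ a, ∃ i, a < i ∧ i ∈ S

section UnbLemmas

variable {ι : Type u} [LinearOrder ι] {S T : Set ι}

lemma unb_mono (h : S ⊆ T) (hS : Unb S) : Unb T := fun a =>
  let ⟨i, h1, h2⟩ := hS a; ⟨i, h1, h h2⟩

lemma not_unb (h : ¬ Unb S) : ∃ a, ∀ i ∈ S, i ≤ a := by
  unfold Unb at h
  push_neg at h
  obtain ⟨a, ha⟩ := h
  exact ⟨a, fun i hi => not_lt.1 fun hlt => ha i hlt hi⟩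

lemma unb_diff (hS : Unb S) (hT : ¬ Unb T) : Unb (S \ T) := by
  obtain ⟨b, hb⟩ := not_unb hT
  intro a
  obtain ⟨i, h1, h2⟩ := hS (max a b)
  exact ⟨i, (le_max_left a b).trans_lt h1, h2,
    fun hiT => absurd (hb i hiT) (not_le.2 ((le_max_right a b).trans_lt h1))⟩

lemma unb_union (h : Unb (S ∪ T)) : Unb S ∨ Unb T := by
  by_contra hc
  push_neg at hc
  obtain ⟨b1, hb1⟩ := not_unb hc.1
  obtain ⟨b2, hb2⟩ := not_unb hc.2
  obtain ⟨i, h1, h2⟩ := h (max b1 b2)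
  rcases h2 with h2 | h2
  · exact absurd (hb1 i h2) (not_le.2 ((le_max_left b1 b2).trans_lt h1))
  · exact absurd (hb2 i h2) (not_le.2 ((le_max_right b1 b2).trans_lt h1))

lemma unb_univ [NoMaxOrder ι] : Unb (Set.univ : Set ι) := fun a =>
  let ⟨b, hb⟩ := exists_gt a; ⟨b, hb, trivial⟩

end UnbLemmas

/-- From a nonempty subset `W` without a maximum and a cofinal subset `S` of it, extract a
strictly increasing sequence of regular length `κ ≤ #S` which is cofinal in `W`. -/
lemma exists_cofinal_seq {α : Type u} [LinearOrder α] {W S : Set α}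
    (hSW : S ⊆ W) (hScof : ∀ w ∈ W, ∃ s ∈ S, w ≤ s)
    (hnomax : ∀ w ∈ W, ∃ w' ∈ W, w < w') (hne : W.Nonempty) :
    ∃ κ : Cardinal.{u}, κ.IsRegular ∧ κ ≤ #S ∧
      ∃ g : κ.ord.ToType → α, StrictMono g ∧ (∀ ξ, g ξ ∈ W) ∧ ∀ w ∈ W, ∃ ξ, w ≤ g ξ := by
  classical
  set CS : Set Cardinal.{u} := {c | ∃ T : Set α, T ⊆ W ∧ (∀ w ∈ W, ∃ t ∈ T, w ≤ t) ∧ c = #T}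
    with hCS
  have hSmem : #S ∈ CS := ⟨S, hSW, hScof, rfl⟩
  set κ := sInf CS with hκdef
  obtain ⟨T, hTW, hTcof, hTcard⟩ : κ ∈ CS := csInf_mem ⟨_, hSmem⟩
  have hκS : κ ≤ #S := csInf_le' hSmem
  have key : ∀ B : Set α, B ⊆ W → #B < κ → ∃ w ∈ W, ∀ b ∈ B, b < w := by
    intro B hBW hB
    by_contra hcon
    push_neg at hcon
    have : κ ≤ #B := csInf_le' ⟨B, hBW, fun w hw => hcon w hw, rfl⟩
    exact absurd hB (not_lt.2 this)
  have hTne : T.Nonempty := by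
    obtain ⟨w, hw⟩ := hne
    obtain ⟨t, ht, _⟩ := hTcof w hw
    exact ⟨t, ht⟩
  have hκinf : ℵ₀ ≤ κ := by
    by_contra hfin
    push_neg at hfin
    have hTfin : T.Finite := Cardinal.lt_aleph0_iff_set_finite.1 (hTcard ▸ hfin)
    obtain ⟨m, hmT, hmax⟩ := Set.Finite.exists_maximal hTfin hTne
    obtain ⟨w', hw'W, hlt⟩ := hnomax m (hTW hmT)
    obtain ⟨t, htT, hw't⟩ := hTcof w' hw'W
    have heq : m = t := (fun h => le_antisymm h (hmax htT h)) (le_of_lt (lt_of_lt_of_le hlt hw't))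
    exact (hlt.trans_le hw't).ne heq
  have hmk : #(κ.ord.ToType) = #T := by rw [Cardinal.mk_ord_toType]; exact hTcard
  obtain ⟨e⟩ := Cardinal.eq.1 hmk
  have wf : WellFounded ((· < ·) : κ.ord.ToType → κ.ord.ToType → Prop) :=
    (inferInstance : IsWellFounded κ.ord.ToType (· < ·)).wf
  have spec : ∀ (ξ : κ.ord.ToType) (ih : ∀ η, η < ξ → W),
      ∃ w : W, (∀ η (h : η < ξ), (ih η h : α) < w) ∧ ((e ξ : α) ≤ w) := by
    intro ξ ih
    set B : Set α := Set.range (fun p : {η // η < ξ} => (ih p.1 p.2 : α)) with hBdef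
    have hBW : B ⊆ W := by rintro b ⟨p, rfl⟩; exact (ih p.1 p.2).2
    have hBκ : #B < κ := lt_of_le_of_lt Cardinal.mk_range_le (Cardinal.mk_Iio_ord_toType ξ)
    obtain ⟨w₀, hw₀W, hw₀⟩ := key B hBW hBκ
    rcases le_total w₀ ((e ξ : T) : α) with hle | hle
    · exact ⟨⟨((e ξ : T) : α), hTW (e ξ).2⟩,
        fun η h => lt_of_lt_of_le (hw₀ _ ⟨⟨η, h⟩, rfl⟩) hle, le_rfl⟩
    · exact ⟨⟨w₀, hw₀W⟩, fun η h => hw₀ _ ⟨⟨η, h⟩, rfl⟩, hle⟩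
  set g0 : κ.ord.ToType → W :=
    wf.fix (fun ξ ih => Classical.choose (spec ξ ih)) with hg0
  have hg0eq : ∀ ξ, g0 ξ = Classical.choose (spec ξ (fun η _ => g0 η)) := by
    intro ξ
    rw [hg0]
    exact wf.fix_eq _ ξ
  have hstep : ∀ ξ, (∀ η (h : η < ξ), (g0 η : α) < g0 ξ) ∧ ((e ξ : α) ≤ g0 ξ) := by
    intro ξ
    have h := Classical.choose_spec (spec ξ (fun η _ => g0 η))
    rw [← hg0eq ξ] at h
    exact h
  have hg0mono : StrictMono (fun ξ => (g0 ξ : α)) := fun a b h => (hstep b).1 a h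
  have hg0cof : ∀ w ∈ W, ∃ ξ, w ≤ (g0 ξ : α) := by
    intro w hw
    obtain ⟨t, htT, hwt⟩ := hTcof w hw
    refine ⟨e.symm ⟨t, htT⟩, ?_⟩
    have h2 := (hstep (e.symm ⟨t, htT⟩)).2
    rw [Equiv.apply_symm_apply] at h2
    exact hwt.trans h2
  have hregcof : κ ≤ κ.ord.cof := by
    rw [← Ordinal.cof_toType, Order.le_cof_iff]
    intro U hUunb
    have h1 : κ ≤ #((fun ξ => (g0 ξ : α)) '' U) := by
      refine csInf_le' ⟨_, ?_, ?_, rfl⟩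
      · rintro b ⟨ξ, _, rfl⟩; exact (g0 ξ).2
      · intro w hw
        obtain ⟨ξ, hξ⟩ := hg0cof w hw
        obtain ⟨b, hbU, hb⟩ := hUunb ξ
        exact ⟨(g0 b : α), ⟨b, hbU, rfl⟩, hξ.trans (hg0mono.monotone hb)⟩
    calc κ ≤ #((fun ξ => (g0 ξ : α)) '' U) := h1
      _ ≤ #U := Cardinal.mk_image_le
  exact ⟨κ, ⟨hκinf, hregcof⟩, hκS, fun ξ => (g0 ξ : α), hg0mono,
    fun ξ => (g0 ξ).2, hg0cof⟩


/-- Dual of `exists_cofinal_seq`: coinitial decreasing sequence of regular length. -/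
lemma exists_coinitial_seq {α : Type u} [LinearOrder α] {W S : Set α}
    (hSW : S ⊆ W) (hScof : ∀ w ∈ W, ∃ s ∈ S, s ≤ w)
    (hnomin : ∀ w ∈ W, ∃ w' ∈ W, w' < w) (hne : W.Nonempty) :
    ∃ κ : Cardinal.{u}, κ.IsRegular ∧ κ ≤ #S ∧
      ∃ g : κ.ord.ToType → α, StrictAnti g ∧ (∀ ξ, g ξ ∈ W) ∧ ∀ w ∈ W, ∃ ξ, g ξ ≤ w := by
  classical
  set CS : Set Cardinal.{u} := {c | ∃ T : Set α, T ⊆ W ∧ (∀ w ∈ W, ∃ t ∈ T, t ≤ w) ∧ c = #T}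
    with hCS
  have hSmem : #S ∈ CS := ⟨S, hSW, hScof, rfl⟩
  set κ := sInf CS with hκdef
  obtain ⟨T, hTW, hTcof, hTcard⟩ : κ ∈ CS := csInf_mem ⟨_, hSmem⟩
  have hκS : κ ≤ #S := csInf_le' hSmem
  have key : ∀ B : Set α, B ⊆ W → #B < κ → ∃ w ∈ W, ∀ b ∈ B, w < b := by
    intro B hBW hB
    by_contra hcon
    push_neg at hcon
    have : κ ≤ #B := csInf_le' ⟨B, hBW, fun w hw => hcon w hw, rfl⟩
    exact absurd hB (not_lt.2 this)
  have hTne : T.Nonempty := by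
    obtain ⟨w, hw⟩ := hne
    obtain ⟨t, ht, _⟩ := hTcof w hw
    exact ⟨t, ht⟩
  have hκinf : ℵ₀ ≤ κ := by
    by_contra hfin
    push_neg at hfin
    have hTfin : T.Finite := Cardinal.lt_aleph0_iff_set_finite.1 (hTcard ▸ hfin)
    obtain ⟨m, hmT, hmin⟩ := Set.Finite.exists_minimal hTfin hTne
    obtain ⟨w', hw'W, hlt⟩ := hnomin m (hTW hmT)
    obtain ⟨t, htT, hw't⟩ := hTcof w' hw'W
    have heq : m = t := (fun h => le_antisymm (hmin htT h) h) (le_of_lt (lt_of_le_of_lt hw't hlt))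
    exact (hw't.trans_lt hlt).ne' heq
  have hmk : #(κ.ord.ToType) = #T := by rw [Cardinal.mk_ord_toType]; exact hTcard
  obtain ⟨e⟩ := Cardinal.eq.1 hmk
  have wf : WellFounded ((· < ·) : κ.ord.ToType → κ.ord.ToType → Prop) :=
    (inferInstance : IsWellFounded κ.ord.ToType (· < ·)).wf
  have spec : ∀ (ξ : κ.ord.ToType) (ih : ∀ η, η < ξ → W),
      ∃ w : W, (∀ η (h : η < ξ), (w : α) < (ih η h : α)) ∧ ((w : α) ≤ (e ξ : α)) := by
    intro ξ ih
    set B : Set α := Set.range (fun p : {η // η < ξ} => (ih p.1 p.2 : α)) with hBdef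
    have hBW : B ⊆ W := by rintro b ⟨p, rfl⟩; exact (ih p.1 p.2).2
    have hBκ : #B < κ := lt_of_le_of_lt Cardinal.mk_range_le (Cardinal.mk_Iio_ord_toType ξ)
    obtain ⟨w₀, hw₀W, hw₀⟩ := key B hBW hBκ
    rcases le_total ((e ξ : T) : α) w₀ with hle | hle
    · exact ⟨⟨((e ξ : T) : α), hTW (e ξ).2⟩,
        fun η h => lt_of_le_of_lt hle (hw₀ _ ⟨⟨η, h⟩, rfl⟩), le_rfl⟩
    · exact ⟨⟨w₀, hw₀W⟩, fun η h => hw₀ _ ⟨⟨η, h⟩, rfl⟩, hle⟩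
  set g0 : κ.ord.ToType → W :=
    wf.fix (fun ξ ih => Classical.choose (spec ξ ih)) with hg0
  have hg0eq : ∀ ξ, g0 ξ = Classical.choose (spec ξ (fun η _ => g0 η)) := by
    intro ξ
    rw [hg0]
    exact wf.fix_eq _ ξ
  have hstep : ∀ ξ, (∀ η (h : η < ξ), (g0 ξ : α) < (g0 η : α)) ∧ ((g0 ξ : α) ≤ (e ξ : α)) := by
    intro ξ
    have h := Classical.choose_spec (spec ξ (fun η _ => g0 η))
    rw [← hg0eq ξ] at h
    exact h
  have hg0anti : StrictAnti (fun ξ => (g0 ξ : α)) := fun a b h => (hstep b).1 a h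
  have hg0cof : ∀ w ∈ W, ∃ ξ, (g0 ξ : α) ≤ w := by
    intro w hw
    obtain ⟨t, htT, hwt⟩ := hTcof w hw
    refine ⟨e.symm ⟨t, htT⟩, ?_⟩
    have h2 := (hstep (e.symm ⟨t, htT⟩)).2
    rw [Equiv.apply_symm_apply] at h2
    exact h2.trans hwt
  have hregcof : κ ≤ κ.ord.cof := by
    rw [← Ordinal.cof_toType, Order.le_cof_iff]
    intro U hUunb
    have h1 : κ ≤ #((fun ξ => (g0 ξ : α)) '' U) := by
      refine csInf_le' ⟨_, ?_, ?_, rfl⟩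
      · rintro b ⟨ξ, _, rfl⟩; exact (g0 ξ).2
      · intro w hw
        obtain ⟨ξ, hξ⟩ := hg0cof w hw
        obtain ⟨b, hbU, hb⟩ := hUunb ξ
        exact ⟨(g0 b : α), ⟨b, hbU, rfl⟩, (hg0anti.antitone hb).trans hξ⟩
    calc κ ≤ #((fun ξ => (g0 ξ : α)) '' U) := h1
      _ ≤ #U := Cardinal.mk_image_le
  exact ⟨κ, ⟨hκinf, hregcof⟩, hκS, fun ξ => (g0 ξ : α), hg0anti,
    fun ξ => (g0 ξ).2, hg0cof⟩


/-- Main lemma: under the convergence hypothesis, every sequence of regular length `ν ≤ lam`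
has a point every neighbourhood of which contains terms of unboundedly large index. -/
lemma accum {X : Type u} [LinearOrder X] [TopologicalSpace X]
    {𝓑 : Set (Set X)} (hBasis : IsTopologicalBasis 𝓑) (hBc : ∀ s ∈ 𝓑, s.OrdConnected)
    {lam : Cardinal.{u}}
    (H : ∀ ν' : Cardinal.{u}, ν'.IsRegular → ν' ≤ lam →
        (∀ f : ν'.ord.ToType → X, StrictMono f →
          ∃ s : X, IsLUB (Set.range f) s ∧ Tendsto f atTop (𝓝 s)) ∧
        (∀ f : ν'.ord.ToType → X, StrictAnti f →
          ∃ s : X, IsGLB (Set.range f) s ∧ Tendsto f atTop (𝓝 s)))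
    {ν : Cardinal.{u}} (hreg : ν.IsRegular) (hνlam : ν ≤ lam)
    (x : ν.ord.ToType → X) :
    ∃ p : X, ∀ U, IsOpen U → p ∈ U → Unb {i | x i ∈ U} := by
  classical
  haveI hne : Nonempty ν.ord.ToType := by
    rw [← Cardinal.mk_ne_zero_iff, Cardinal.mk_ord_toType]
    exact (aleph0_pos.trans_le hreg.1).ne'
  haveI : NoMaxOrder ν.ord.ToType := Cardinal.noMaxOrder hreg.1
  have hrange : #(Set.range x) ≤ ν :=
    Cardinal.mk_range_le.trans_eq (Cardinal.mk_ord_toType ν)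
  have texists : ∀ {κ' : Cardinal.{u}}, κ'.IsRegular → ∀ (h : κ'.ord.ToType → X) (s : X)
      (B : Set X), Tendsto h atTop (𝓝 s) → IsOpen B → s ∈ B → ∃ ξ, h ξ ∈ B := by
    intro κ' hκ h s B ht hBo hsB
    haveI : Nonempty κ'.ord.ToType := by
      rw [← Cardinal.mk_ne_zero_iff, Cardinal.mk_ord_toType]
      exact (aleph0_pos.trans_le hκ.1).ne'
    exact Filter.nonempty_of_mem (ht (hBo.mem_nhds hsB))
  by_cases hcase1 : ∃ z, Unb {i | x i = z}
  · obtain ⟨z, hz⟩ := hcase1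
    refine ⟨z, fun U _ hzU => unb_mono ?_ hz⟩
    intro i hi
    simp only [Set.mem_setOf_eq] at hi ⊢
    rw [hi]; exact hzU
  push_neg at hcase1
  set L : Set X := {z | Unb {i | z ≤ x i}} with hLdef
  have hLdown : ∀ {z z' : X}, z' ≤ z → z ∈ L → z' ∈ L :=
    fun h hz => unb_mono (fun i hi => le_trans h hi) hz
  have hstrict : ∀ z ∈ L, Unb {i | z < x i} := by
    intro z hz
    refine unb_mono ?_ (unb_diff hz (hcase1 z))
    rintro i ⟨h1, h2⟩
    exact lt_of_le_of_ne h1 fun h => h2 h.symm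
  have hnotL : ∀ z ∉ L, ∃ a, ∀ i, a < i → x i < z := by
    intro z hz
    obtain ⟨a, ha⟩ := not_unb hz
    exact ⟨a, fun i hi => not_le.1 fun hle => absurd hi (not_lt.2 (ha i hle))⟩
  have hcut : ∀ z ∈ L, ∀ z' ∉ L, z < z' := by
    intro z hz z' hz'
    by_contra hle
    exact hz' (hLdown (not_lt.1 hle) hz)
  have hLne : L.Nonempty := by
    by_contra hLe
    rw [Set.not_nonempty_iff_eq_empty] at hLe
    have hnomin : ∀ w : X, ∃ w', w' < w := by
      intro w
      have hw : w ∉ L := by rw [hLe]; exact Set.notMem_empty w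
      obtain ⟨a, ha⟩ := hnotL w hw
      obtain ⟨i, hi⟩ := exists_gt a
      exact ⟨x i, ha i hi⟩
    obtain ⟨κ', hκreg, hκS, g, hganti, hgW, hgcoin⟩ :=
      exists_coinitial_seq (Set.subset_univ (Set.range x))
        (fun w _ => by
          have hw : w ∉ L := by rw [hLe]; exact Set.notMem_empty w
          obtain ⟨a, ha⟩ := hnotL w hw
          obtain ⟨i, hi⟩ := exists_gt a
          exact ⟨x i, Set.mem_range_self i, (ha i hi).le⟩)
        (fun w _ => let ⟨w', h⟩ := hnomin w; ⟨w', trivial, h⟩)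
        ⟨x (Classical.arbitrary _), trivial⟩
    obtain ⟨s, hglb, _⟩ := (H κ' hκreg ((hκS.trans hrange).trans hνlam)).2 g hganti
    obtain ⟨w', hw'⟩ := hnomin s
    obtain ⟨ξ, hξ⟩ := hgcoin w' trivial
    exact lt_irrefl s (lt_of_le_of_lt ((hglb.1 (Set.mem_range_self ξ)).trans hξ) hw')
  have hLcne : ∃ z, z ∉ L := by
    by_contra hall
    push_neg at hall
    obtain ⟨κ', hκreg, hκS, g, hgmono, hgW, hgcof⟩ :=
      exists_cofinal_seq (Set.subset_univ (Set.range x))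
        (fun w _ => by
          obtain ⟨i, _, hi⟩ := hstrict w (hall w) (Classical.arbitrary _)
          exact ⟨x i, Set.mem_range_self i, hi.le⟩)
        (fun w _ => by
          obtain ⟨i, _, hi⟩ := hstrict w (hall w) (Classical.arbitrary _)
          exact ⟨x i, trivial, hi⟩)
        ⟨x (Classical.arbitrary _), trivial⟩
    obtain ⟨s, hlub, _⟩ := (H κ' hκreg ((hκS.trans hrange).trans hνlam)).1 g hgmono
    obtain ⟨i, _, hi⟩ := hstrict s (hall s) (Classical.arbitrary _)
    obtain ⟨ξ, hξ⟩ := hgcof (x i) trivial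
    exact lt_irrefl s (lt_of_lt_of_le hi (hξ.trans (hlub.1 (Set.mem_range_self ξ))))
  by_cases hbmax : ∃ m ∈ L, ∀ z ∈ L, z ≤ m
  · obtain ⟨m, hmL, hmmax⟩ := hbmax
    have hup : Unb {i | m < x i} := hstrict m hmL
    have hsmall : ∀ u, m < u → Unb {i | m < x i ∧ x i < u} := by
      intro u hu
      have huL : u ∉ L := fun huL => absurd hu (not_lt.2 (hmmax u huL))
      have huL' : ¬ Unb {i | u ≤ x i} := huL
      refine unb_mono ?_ (unb_diff hup huL')
      rintro i ⟨h1, h2⟩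
      exact ⟨h1, not_le.1 h2⟩
    refine ⟨m, ?_⟩
    intro U hUo hmU
    obtain ⟨B, hB𝓑, hmB, hBU⟩ := hBasis.exists_subset_of_mem_open hmU hUo
    have hBconv := hBc B hB𝓑
    by_cases hexu : ∃ u ∈ B, m < u
    · obtain ⟨u, huB, hmu⟩ := hexu
      refine unb_mono ?_ (hsmall u hmu)
      rintro i ⟨h1, h2⟩
      exact hBU (hBconv.out hmB huB ⟨h1.le, h2.le⟩)
    · exfalso
      push_neg at hexu
      set V : Set X := {v | m < v ∧ ∃ i, x i = v} with hVdef
      have hVsub : V ⊆ Set.range x := fun v hv => hv.2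
      have hVne : V.Nonempty := by
        obtain ⟨i, _, h2⟩ := hup (Classical.arbitrary _)
        exact ⟨x i, h2, i, rfl⟩
      have hVnomin : ∀ v ∈ V, ∃ v' ∈ V, v' < v := by
        intro v hv
        obtain ⟨i, _, h1, h2⟩ := hsmall v hv.1 (Classical.arbitrary _)
        exact ⟨x i, ⟨h1, i, rfl⟩, h2⟩
      obtain ⟨κ', hκreg, hκS, g, hganti, hgV, hgcoin⟩ :=
        exists_coinitial_seq (Set.Subset.refl V) (fun w hw => ⟨w, hw, le_rfl⟩) hVnomin hVne
      obtain ⟨s, hglb, htend⟩ :=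
        (H κ' hκreg (((hκS.trans (Cardinal.mk_le_mk_of_subset hVsub)).trans
          hrange).trans hνlam)).2 g hganti
      have hms : m ≤ s := hglb.2 fun y hy => by
        obtain ⟨ξ, rfl⟩ := hy
        exact (hgV ξ).1.le
      have hsm : s = m := by
        rcases eq_or_lt_of_le hms with h | h
        · exact h.symm
        · exfalso
          obtain ⟨i, _, h1, h2⟩ := hsmall s h (Classical.arbitrary _)
          obtain ⟨ξ, hξ⟩ := hgcoin (x i) ⟨h1, i, rfl⟩
          exact lt_irrefl s (lt_of_le_of_lt ((hglb.1 (Set.mem_range_self ξ)).trans hξ) h2)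
      obtain ⟨ξ, hξB⟩ := texists hκreg g s B htend (hBasis.isOpen hB𝓑)
        (by rw [hsm]; exact hmB)
      exact absurd (hexu (g ξ) hξB) (not_le.2 (hgV ξ).1)
  · push_neg at hbmax
    by_cases hamin : ∃ m, m ∉ L ∧ ∀ z, z ∉ L → m ≤ z
    · obtain ⟨m, hmL, hmmin⟩ := hamin
      have hdown : ∀ z, z < m → z ∈ L := by
        intro z hz
        by_contra hzL
        exact absurd hz (not_lt.2 (hmmin z hzL))
      have hnotm : ¬ Unb {i | m ≤ x i} := hmL
      have hsmall : ∀ u, u < m → Unb {i | u < x i ∧ x i < m} := by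
        intro u hu
        refine unb_mono ?_ (unb_diff (hstrict u (hdown u hu)) hnotm)
        rintro i ⟨h1, h2⟩
        exact ⟨h1, not_le.1 h2⟩
      obtain ⟨zL, hzL⟩ := hLne
      have hzLm : zL < m := hcut zL hzL m hmL
      refine ⟨m, ?_⟩
      intro U hUo hmU
      obtain ⟨B, hB𝓑, hmB, hBU⟩ := hBasis.exists_subset_of_mem_open hmU hUo
      have hBconv := hBc B hB𝓑
      by_cases hexu : ∃ u ∈ B, u < m
      · obtain ⟨u, huB, hum⟩ := hexu
        refine unb_mono ?_ (hsmall u hum)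
        rintro i ⟨h1, h2⟩
        exact hBU (hBconv.out huB hmB ⟨h1.le, h2.le⟩)
      · exfalso
        push_neg at hexu
        set V : Set X := {v | v < m ∧ ∃ i, x i = v} with hVdef
        have hVsub : V ⊆ Set.range x := fun v hv => hv.2
        have hVne : V.Nonempty := by
          obtain ⟨i, _, h1, h2⟩ := hsmall zL hzLm (Classical.arbitrary _)
          exact ⟨x i, h2, i, rfl⟩
        have hVnomax : ∀ v ∈ V, ∃ v' ∈ V, v < v' := by
          intro v hv
          obtain ⟨i, _, h1, h2⟩ := hsmall v hv.1 (Classical.arbitrary _)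
          exact ⟨x i, ⟨h2, i, rfl⟩, h1⟩
        obtain ⟨κ', hκreg, hκS, g, hgmono, hgV, hgcof⟩ :=
          exists_cofinal_seq (Set.Subset.refl V) (fun w hw => ⟨w, hw, le_rfl⟩) hVnomax hVne
        obtain ⟨s, hlub, htend⟩ :=
          (H κ' hκreg (((hκS.trans (Cardinal.mk_le_mk_of_subset hVsub)).trans
            hrange).trans hνlam)).1 g hgmono
        have hsm' : s ≤ m := hlub.2 fun y hy => by
          obtain ⟨ξ, rfl⟩ := hy
          exact (hgV ξ).1.le
        have hsm : s = m := by
          rcases eq_or_lt_of_le hsm' with h | h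
          · exact h
          · exfalso
            obtain ⟨i, _, h1, h2⟩ := hsmall s h (Classical.arbitrary _)
            obtain ⟨ξ, hξ⟩ := hgcof (x i) ⟨h2, i, rfl⟩
            exact lt_irrefl s (lt_of_lt_of_le h1 (hξ.trans (hlub.1 (Set.mem_range_self ξ))))
        obtain ⟨ξ, hξB⟩ := texists hκreg g s B htend (hBasis.isOpen hB𝓑)
          (by rw [hsm]; exact hmB)
        exact absurd (hexu (g ξ) hξB) (not_le.2 (hgV ξ).1)
    · exfalso
      push_neg at hamin
      obtain ⟨zR, hzR⟩ := hLcne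
      by_cases hT : Unb {i | x i ∉ L}
      · have hcoin : ∀ z, z ∉ L → ∃ i, x i ∉ L ∧ x i < z := by
          intro z hz
          have hz' : ¬ Unb {i | z ≤ x i} := hz
          obtain ⟨i, _, h1, h2⟩ := unb_diff hT hz' (Classical.arbitrary _)
          exact ⟨i, h1, not_le.1 h2⟩
        obtain ⟨κ', hκreg, hκS, g, hganti, hgW, hgcoin⟩ :=
          exists_coinitial_seq (W := {z | z ∉ L})
            (S := {v | (v ∈ Set.range x) ∧ v ∉ L})
            (fun v hv => hv.2)
            (fun w hw => by
              obtain ⟨i, h1, h2⟩ := hcoin w hw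
              exact ⟨x i, ⟨Set.mem_range_self i, h1⟩, h2.le⟩)
            (fun w hw => by
              obtain ⟨z, hz1, hz2⟩ := hamin w hw
              exact ⟨z, hz1, hz2⟩)
            ⟨zR, hzR⟩
        obtain ⟨s, hglb, _⟩ :=
          (H κ' hκreg (((hκS.trans (Cardinal.mk_le_mk_of_subset fun v hv => hv.1)).trans
            hrange).trans hνlam)).2 g hganti
        have hslb : ∀ z, z ∉ L → s ≤ z := by
          intro z hz
          obtain ⟨ξ, hξ⟩ := hgcoin z hz
          exact (hglb.1 (Set.mem_range_self ξ)).trans hξ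
        by_cases hsL : s ∈ L
        · obtain ⟨z, hz1, hz2⟩ := hbmax s hsL
          have hzs : z ≤ s := hglb.2 fun y hy => by
            obtain ⟨ξ, rfl⟩ := hy
            exact (hcut z hz1 _ (hgW ξ)).le
          exact absurd hzs (not_le.2 hz2)
        · obtain ⟨z, hz1, hz2⟩ := hamin s hsL
          exact absurd (hslb z hz1) (not_le.2 hz2)
      · have hcof : ∀ z ∈ L, ∃ i, x i ∈ L ∧ z ≤ x i := by
          intro z hz
          have hz' : Unb {i | z ≤ x i} := hz
          obtain ⟨i, _, h1, h2⟩ := unb_diff hz' hT (Classical.arbitrary _)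
          exact ⟨i, not_not.1 h2, h1⟩
        obtain ⟨κ', hκreg, hκS, g, hgmono, hgL, hgcof⟩ :=
          exists_cofinal_seq (W := L)
            (S := {v | (v ∈ Set.range x) ∧ v ∈ L})
            (fun v hv => hv.2)
            (fun w hw => by
              obtain ⟨i, h1, h2⟩ := hcof w hw
              exact ⟨x i, ⟨Set.mem_range_self i, h1⟩, h2⟩)
            (fun w hw => by
              obtain ⟨z, hz1, hz2⟩ := hbmax w hw
              exact ⟨z, hz1, hz2⟩)
            hLne
        obtain ⟨s, hlub, _⟩ :=
          (H κ' hκreg (((hκS.trans (Cardinal.mk_le_mk_of_subset fun v hv => hv.1)).trans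
            hrange).trans hνlam)).1 g hgmono
        have hsub : ∀ z ∈ L, z ≤ s := by
          intro z hz
          obtain ⟨ξ, hξ⟩ := hgcof z hz
          exact hξ.trans (hlub.1 (Set.mem_range_self ξ))
        by_cases hsL : s ∈ L
        · obtain ⟨z, hz1, hz2⟩ := hbmax s hsL
          exact absurd (hsub z hz1) (not_le.2 hz2)
        · obtain ⟨z, hz1, hz2⟩ := hamin s hsL
          have hsz : s ≤ z := hlub.2 fun y hy => by
            obtain ⟨ξ, rfl⟩ := hy
            exact (hcut _ (hgL ξ) z hz1).le
          exact absurd hsz (not_le.2 hz2)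


end Stmt13Aux

open Stmt13Aux in
/-- A GO space is initially `lam`-compact iff, for every infinite regular `ν ≤ lam`, every
strictly increasing `ν`-indexed sequence has a supremum to which it converges and every
strictly decreasing `ν`-indexed sequence has an infimum to which it converges. -/
theorem stmt13 (lam : Cardinal.{u}) (hlam : ℵ₀ ≤ lam)
    (X : Type u) [LinearOrder X] [TopologicalSpace X] [T2Space X]
    (hGO : ∃ 𝓑 : Set (Set X), IsTopologicalBasis 𝓑 ∧ ∀ s ∈ 𝓑, s.OrdConnected) :
    InitiallyCompact X lam ↔
      ∀ ν : Cardinal.{u}, ℵ₀ ≤ ν → ν.IsRegular → ν ≤ lam →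
        (∀ f : ν.ord.ToType → X, StrictMono f →
          ∃ s : X, IsLUB (Set.range f) s ∧ Tendsto f atTop (𝓝 s)) ∧
        (∀ f : ν.ord.ToType → X, StrictAnti f →
          ∃ s : X, IsGLB (Set.range f) s ∧ Tendsto f atTop (𝓝 s)) := by
  classical
  obtain ⟨𝓑, hBasis, hBc⟩ := hGO
  constructor
  · -- forward
    intro hIC ν hν hreg hνlam
    haveI hne : Nonempty ν.ord.ToType := by
      rw [← Cardinal.mk_ne_zero_iff, Cardinal.mk_ord_toType]
      exact (Cardinal.aleph0_pos.trans_le hν).ne'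
    haveI : NoMaxOrder ν.ord.ToType := Cardinal.noMaxOrder hν
    have hcapgen : ∀ f : ν.ord.ToType → X,
        (⋂ γ, closure (f '' Set.Ici γ)).Nonempty := by
      intro f
      set F : ν.ord.ToType → Set X := fun γ => closure (f '' Set.Ici γ) with hF
      by_contra hcap
      rw [Set.not_nonempty_iff_eq_empty] at hcap
      obtain ⟨𝒱, h𝒱, hfin, hcov⟩ := hIC (Set.range fun γ => (F γ)ᶜ)
        (by rintro U ⟨γ, rfl⟩; exact isClosed_closure.isOpen_compl)
        (by
          ext p
          simp only [Set.mem_sUnion, Set.mem_univ, iff_true]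
          have hp : p ∉ ⋂ γ, F γ := by rw [hcap]; exact Set.notMem_empty p
          rw [Set.mem_iInter] at hp
          push_neg at hp
          obtain ⟨γ, hγ⟩ := hp
          exact ⟨(F γ)ᶜ, ⟨γ, rfl⟩, hγ⟩)
        (Cardinal.mk_range_le.trans ((Cardinal.mk_ord_toType ν).le.trans hνlam))
      have hch : ∀ V ∈ 𝒱, ∃ γ, (F γ)ᶜ = V := fun V hV => h𝒱 hV
      choose c hc using hch
      set G : Set (ν.ord.ToType) := {γ | ∃ V, ∃ hV : V ∈ 𝒱, c V hV = γ} with hG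
      have hGfin : G.Finite := hfin.dependent_image c
      have hp₀ : f (Classical.arbitrary _) ∈ ⋃₀ 𝒱 := by rw [hcov]; trivial
      obtain ⟨V₀, hV₀, _⟩ := hp₀
      have hGne : G.Nonempty := ⟨c V₀ hV₀, V₀, hV₀, rfl⟩
      obtain ⟨γm, hγmG, hγmax⟩ := Set.Finite.exists_maximal hGfin hGne
      have hub : ∀ b ∈ G, b ≤ γm :=
        fun b hb => not_lt.1 fun hlt => absurd (hγmax hb hlt.le) (not_le.2 hlt)
      have hmem : f γm ∈ ⋃₀ 𝒱 := by rw [hcov]; trivial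
      obtain ⟨V, hV, hmemV⟩ := hmem
      rw [← hc V hV] at hmemV
      exact hmemV (subset_closure ⟨γm, hub _ ⟨V, hV, rfl⟩, rfl⟩)
    constructor
    · intro f hf
      obtain ⟨p, hp⟩ := hcapgen f
      rw [Set.mem_iInter] at hp
      have hub : ∀ γ, f γ ≤ p := by
        intro γ
        by_contra hlt
        push_neg at hlt
        obtain ⟨γ', hγ'⟩ := exists_gt γ
        have hp' := hp γ'
        rw [mem_closure_iff] at hp'
        obtain ⟨B, hB𝓑, hpB, hBU⟩ := hBasis.exists_subset_of_mem_open
          (Set.mem_compl_singleton_iff.2 (ne_of_lt hlt)) isOpen_compl_singleton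
        obtain ⟨q, hqB, hq⟩ := hp' B (hBasis.isOpen hB𝓑) hpB
        obtain ⟨δ, hδ, rfl⟩ := hq
        have hfB : f γ ∈ B := (hBc B hB𝓑).out hpB hqB
          ⟨hlt.le, ((hf hγ').le.trans (hf.monotone hδ))⟩
        exact hBU hfB rfl
      have hlub : IsLUB (Set.range f) p := by
        constructor
        · rintro y ⟨γ, rfl⟩
          exact hub γ
        · intro b hb
          by_contra hbp
          push_neg at hbp
          have hp' := hp (Classical.arbitrary _)
          rw [mem_closure_iff] at hp'
          obtain ⟨B, hB𝓑, hpB, hBU⟩ := hBasis.exists_subset_of_mem_open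
            (Set.mem_compl_singleton_iff.2 (ne_of_gt hbp)) isOpen_compl_singleton
          obtain ⟨q, hqB, hq⟩ := hp' B (hBasis.isOpen hB𝓑) hpB
          obtain ⟨δ, _, rfl⟩ := hq
          have hbB : b ∈ B := (hBc B hB𝓑).out hqB hpB ⟨hb ⟨δ, rfl⟩, hbp.le⟩
          exact hBU hbB rfl
      refine ⟨p, hlub, ?_⟩
      rw [Filter.tendsto_def]
      intro s hs
      rw [mem_nhds_iff] at hs
      obtain ⟨U, hUs, hUo, hpU⟩ := hs
      obtain ⟨B, hB𝓑, hpB, hBU⟩ := hBasis.exists_subset_of_mem_open hpU hUo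
      have hp' := hp (Classical.arbitrary _)
      rw [mem_closure_iff] at hp'
      obtain ⟨q, hqB, hq⟩ := hp' B (hBasis.isOpen hB𝓑) hpB
      obtain ⟨γ₁, _, rfl⟩ := hq
      refine Filter.mem_of_superset (Filter.Ici_mem_atTop γ₁) ?_
      intro γ hγ
      exact hUs (hBU ((hBc B hB𝓑).out hqB hpB ⟨hf.monotone hγ, hub γ⟩))
    · intro f hf
      obtain ⟨p, hp⟩ := hcapgen f
      rw [Set.mem_iInter] at hp
      have hlb : ∀ γ, p ≤ f γ := by
        intro γ
        by_contra hlt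
        push_neg at hlt
        obtain ⟨γ', hγ'⟩ := exists_gt γ
        have hp' := hp γ'
        rw [mem_closure_iff] at hp'
        obtain ⟨B, hB𝓑, hpB, hBU⟩ := hBasis.exists_subset_of_mem_open
          (Set.mem_compl_singleton_iff.2 (ne_of_gt hlt)) isOpen_compl_singleton
        obtain ⟨q, hqB, hq⟩ := hp' B (hBasis.isOpen hB𝓑) hpB
        obtain ⟨δ, hδ, rfl⟩ := hq
        have hfB : f γ ∈ B := (hBc B hB𝓑).out hqB hpB
          ⟨(hf.antitone hδ).trans (hf hγ').le, hlt.le⟩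
        exact hBU hfB rfl
      have hglb : IsGLB (Set.range f) p := by
        constructor
        · rintro y ⟨γ, rfl⟩
          exact hlb γ
        · intro b hb
          by_contra hbp
          push_neg at hbp
          have hp' := hp (Classical.arbitrary _)
          rw [mem_closure_iff] at hp'
          obtain ⟨B, hB𝓑, hpB, hBU⟩ := hBasis.exists_subset_of_mem_open
            (Set.mem_compl_singleton_iff.2 (ne_of_lt hbp)) isOpen_compl_singleton
          obtain ⟨q, hqB, hq⟩ := hp' B (hBasis.isOpen hB𝓑) hpB
          obtain ⟨δ, _, rfl⟩ := hq
          have hbB : b ∈ B := (hBc B hB𝓑).out hpB hqB ⟨hbp.le, hb ⟨δ, rfl⟩⟩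
          exact hBU hbB rfl
      refine ⟨p, hglb, ?_⟩
      rw [Filter.tendsto_def]
      intro s hs
      rw [mem_nhds_iff] at hs
      obtain ⟨U, hUs, hUo, hpU⟩ := hs
      obtain ⟨B, hB𝓑, hpB, hBU⟩ := hBasis.exists_subset_of_mem_open hpU hUo
      have hp' := hp (Classical.arbitrary _)
      rw [mem_closure_iff] at hp'
      obtain ⟨q, hqB, hq⟩ := hp' B (hBasis.isOpen hB𝓑) hpB
      obtain ⟨γ₁, _, rfl⟩ := hq
      refine Filter.mem_of_superset (Filter.Ici_mem_atTop γ₁) ?_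
      intro γ hγ
      exact hUs (hBU ((hBc B hB𝓑).out hpB hqB ⟨hlb γ, hf.antitone hγ⟩))
  · -- backward
    intro hyp 𝒰 h𝒰o h𝒰cov h𝒰card
    set CovC : Set Cardinal.{u} :=
      {c | ∃ 𝒱 : Set (Set X), 𝒱 ⊆ 𝒰 ∧ ⋃₀ 𝒱 = Set.univ ∧ c = #𝒱} with hCovC
    have hCovne : CovC.Nonempty := ⟨#𝒰, 𝒰, Set.Subset.refl _, h𝒰cov, rfl⟩
    set μ := sInf CovC with hμdef
    obtain ⟨𝒱, h𝒱𝒰, h𝒱cov, hμcard⟩ : μ ∈ CovC := csInf_mem hCovne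
    by_cases hμfin : μ < ℵ₀
    · exact ⟨𝒱, h𝒱𝒰, Cardinal.lt_aleph0_iff_set_finite.1 (hμcard ▸ hμfin), h𝒱cov⟩
    exfalso
    push_neg at hμfin
    have hμlam : μ ≤ lam :=
      (csInf_le' (show #𝒰 ∈ CovC from ⟨𝒰, Set.Subset.refl _, h𝒰cov, rfl⟩)).trans h𝒰card
    haveI : NoMaxOrder μ.ord.ToType := Cardinal.noMaxOrder hμfin
    haveI : Nonempty μ.ord.ToType := by
      rw [← Cardinal.mk_ne_zero_iff, Cardinal.mk_ord_toType]
      exact (Cardinal.aleph0_pos.trans_le hμfin).ne'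
    have hmk : #(μ.ord.ToType) = #𝒱 := by rw [Cardinal.mk_ord_toType]; exact hμcard
    obtain ⟨e⟩ := Cardinal.eq.1 hmk
    set V : μ.ord.ToType → Set X := fun ξ => (e ξ).1 with hV
    have hVmem : ∀ ξ, V ξ ∈ 𝒱 := fun ξ => (e ξ).2
    have hprefix : ∀ α : μ.ord.ToType, ∃ p : X, ∀ β, β < α → p ∉ V β := by
      intro α
      by_contra hcon
      push_neg at hcon
      have hWcov : ⋃₀ (V '' Set.Iio α) = Set.univ := by
        ext p
        simp only [Set.mem_sUnion, Set.mem_univ, iff_true]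
        obtain ⟨β, hβ, hpβ⟩ := hcon p
        exact ⟨V β, ⟨β, hβ, rfl⟩, hpβ⟩
      have hWsub : V '' Set.Iio α ⊆ 𝒰 := by
        rintro W ⟨β, _, rfl⟩
        exact h𝒱𝒰 (hVmem β)
      have hWcard : #(V '' Set.Iio α) < μ :=
        lt_of_le_of_lt Cardinal.mk_image_le (Cardinal.mk_Iio_ord_toType α)
      exact absurd (csInf_le' (show #(V '' Set.Iio α) ∈ CovC from ⟨_, hWsub, hWcov, rfl⟩)) (not_le.2 hWcard)
    choose x hx using hprefix
    obtain ⟨κ, hκreg, hκμ, g, hgmono, _, hgcof⟩ :=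
      exists_cofinal_seq (α := μ.ord.ToType) (W := Set.univ) (S := Set.univ)
        (Set.Subset.refl _) (fun w _ => ⟨w, trivial, le_rfl⟩)
        (fun w _ => let ⟨w', hw'⟩ := exists_gt w; ⟨w', trivial, hw'⟩)
        ⟨Classical.arbitrary _, trivial⟩
    have hκlam : κ ≤ lam := by
      refine le_trans (hκμ.trans ?_) hμlam
      rw [Cardinal.mk_univ, Cardinal.mk_ord_toType]
    obtain ⟨p, hp⟩ := accum hBasis hBc
      (fun ν' h1 h2 => hyp ν' h1.1 h1 h2) hκreg hκlam (fun ξ => x (g ξ))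
    have hpmem : p ∈ ⋃₀ 𝒱 := by rw [h𝒱cov]; trivial
    obtain ⟨W, hW𝒱, hpW⟩ := hpmem
    have hWV : V (e.symm ⟨W, hW𝒱⟩) = W := by
      rw [hV]
      simp
    set α₀ := e.symm ⟨W, hW𝒱⟩ with hα₀
    obtain ⟨α₁, hα₁⟩ := exists_gt α₀
    obtain ⟨ξ₀, hξ₀⟩ := hgcof α₁ trivial
    obtain ⟨ξ, hξξ₀, hmem⟩ := hp W (h𝒰o W (h𝒱𝒰 hW𝒱)) hpW ξ₀
    have hlt : α₀ < g ξ := lt_of_lt_of_le hα₁ (hξ₀.trans (hgmono hξξ₀).le)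
    refine hx (g ξ) α₀ hlt ?_
    rw [hWV]
    exact hmem
end

section
/- Let λ be an infinite cardinal and let X be a GO space. Then X is initially λ-compact if and only if X is λ-bounded, that is, every subset of X of cardinality ≤ λ has compact closure. -/
universe u v

open Set Cardinal Filter Topology TopologicalSpace

section GO
variable {X : Type u} [LinearOrder X] [TopologicalSpace X] [T2Space X]

lemma go_isOpen_Ioi_s14 (hGO : ∃ 𝓑 : Set (Set X), IsTopologicalBasis 𝓑 ∧ ∀ s ∈ 𝓑, s.OrdConnected)
    (a : X) : IsOpen (Ioi a) := by
  obtain ⟨𝓑, hB, hconv⟩ := hGO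
  rw [isOpen_iff_mem_nhds]
  intro x hx
  obtain ⟨u, v, hu, hv, hxu, hav, huv⟩ := t2_separation (show x ≠ a from ne_of_gt hx)
  obtain ⟨s, hs, hxs, hsu⟩ := hB.exists_subset_of_mem_open hxu hu
  refine Filter.mem_of_superset (hB.mem_nhds hs hxs) ?_
  intro y hy
  by_contra hya
  rw [mem_Ioi] at hya
  have : a ∈ Icc y x := ⟨not_lt.mp hya, le_of_lt hx⟩
  have := (hconv s hs).out hy hxs this
  exact (Set.disjoint_left.mp huv (hsu this)) hav

lemma go_isOpen_Iio_s14 (hGO : ∃ 𝓑 : Set (Set X), IsTopologicalBasis 𝓑 ∧ ∀ s ∈ 𝓑, s.OrdConnected)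
    (a : X) : IsOpen (Iio a) := by
  obtain ⟨𝓑, hB, hconv⟩ := hGO
  rw [isOpen_iff_mem_nhds]
  intro x hx
  obtain ⟨u, v, hu, hv, hxu, hav, huv⟩ := t2_separation (show x ≠ a from ne_of_lt hx)
  obtain ⟨s, hs, hxs, hsu⟩ := hB.exists_subset_of_mem_open hxu hu
  refine Filter.mem_of_superset (hB.mem_nhds hs hxs) ?_
  intro y hy
  by_contra hya
  rw [mem_Iio] at hya
  have : a ∈ Icc x y := ⟨le_of_lt hx, not_lt.mp hya⟩
  have := (hconv s hs).out hxs hy this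
  exact (Set.disjoint_left.mp huv (hsu this)) hav

end GO

section Cluster
variable {X : Type u} [TopologicalSpace X]

lemma directed_finite_subset {𝔉 : Set (Set X)} (hne : 𝔉.Nonempty)
    (hdir : ∀ M ∈ 𝔉, ∀ N ∈ 𝔉, ∃ P ∈ 𝔉, P ⊆ M ∩ N) {t : Set (Set X)} (ht : t.Finite)
    (hts : t ⊆ 𝔉) : ∃ P ∈ 𝔉, ∀ M ∈ t, P ⊆ M := by
  classical
  revert hts
  refine Set.Finite.induction_on t ht ?_ ?_
  · exact fun _ => ⟨hne.choose, hne.choose_spec, by simp⟩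
  · intro a s ha hs ih hts
    obtain ⟨P, hP, hPs⟩ := ih (subset_trans (Set.subset_insert a s) hts)
    obtain ⟨Q, hQ, hQs⟩ := hdir P hP a (hts (Set.mem_insert a s))
    refine ⟨Q, hQ, ?_⟩
    intro M hM
    rcases Set.mem_insert_iff.mp hM with h | h
    · exact h ▸ (subset_trans hQs (Set.inter_subset_right))
    · exact subset_trans (subset_trans hQs Set.inter_subset_left) (hPs M h)

lemma cluster_of_small {lam : Cardinal.{u}} (hIC : InitiallyCompact X lam)
    (𝔉 : Set (Set X)) (hcard : #𝔉 ≤ lam) (hne : 𝔉.Nonempty)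
    (hdir : ∀ M ∈ 𝔉, ∀ N ∈ 𝔉, ∃ P ∈ 𝔉, P ⊆ M ∩ N)
    (hmem : ∀ M ∈ 𝔉, M.Nonempty) : ∃ p, ∀ M ∈ 𝔉, p ∈ closure M := by
  by_contra h
  push_neg at h
  have hcover : ⋃₀ ((fun M => (closure M)ᶜ) '' 𝔉) = Set.univ := by
    ext p
    simp only [Set.mem_sUnion, Set.mem_image, Set.mem_univ, iff_true]
    obtain ⟨M, hM, hpM⟩ := h p
    exact ⟨(closure M)ᶜ, ⟨M, hM, rfl⟩, hpM⟩
  obtain ⟨𝒱, h𝒱sub, h𝒱fin, h𝒱cover⟩ := hIC _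
    (by rintro u ⟨M, _, rfl⟩; exact isClosed_closure.isOpen_compl)
    hcover (le_trans Cardinal.mk_image_le hcard)
  -- each v ∈ 𝒱 is (closure M)ᶜ for some M ∈ 𝔉; gather those M
  have : ∀ v ∈ 𝒱, ∃ M ∈ 𝔉, (closure M)ᶜ = v := fun v hv => by
    obtain ⟨M, hM, hMv⟩ := h𝒱sub hv; exact ⟨M, hM, hMv⟩
  choose! g hg1 hg2 using this
  obtain ⟨P, hP, hPsub⟩ := directed_finite_subset hne hdir (h𝒱fin.image g)
    (by rintro m ⟨v, hv, rfl⟩; exact hg1 v hv)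
  obtain ⟨x, hx⟩ := hmem P hP
  have hxu : x ∈ ⋃₀ 𝒱 := h𝒱cover ▸ Set.mem_univ x
  obtain ⟨v, hv, hxv⟩ := hxu
  have : P ⊆ g v := hPsub (g v) ⟨v, hv, rfl⟩
  have : x ∈ closure (g v) := subset_closure (this hx)
  rw [← hg2 v hv] at hxv
  exact hxv this

end Cluster

section Main
variable {X : Type u} [LinearOrder X] [TopologicalSpace X] [T2Space X]

lemma go_right (hGO : ∃ 𝓑 : Set (Set X), IsTopologicalBasis 𝓑 ∧ ∀ s ∈ 𝓑, s.OrdConnected)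
    {lam : Cardinal.{u}} (hlam : ℵ₀ ≤ lam) (hIC : InitiallyCompact X lam)
    {S : Set X} (hS : Dense S) (hScard : #S ≤ lam) (U : Ultrafilter X)
    (hnp : ∀ x : X, {x} ∉ U) (m : X) (hm : Ici m ∈ U)
    (hmax : ∀ a : X, Ici a ∈ U → a ≤ m) :
    (U : Filter X) ≤ 𝓝 m := by
  classical
  obtain ⟨𝓑, hB, hconv⟩ := hGO
  have hIoiOpen : ∀ a : X, IsOpen (Ioi a) := go_isOpen_Ioi_s14 ⟨𝓑, hB, hconv⟩
  have hIioOpen : ∀ a : X, IsOpen (Iio a) := go_isOpen_Iio_s14 ⟨𝓑, hB, hconv⟩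
  have hIoi : ∀ x : X, Ici x ∈ U → Ioi x ∈ U := by
    intro x hx
    have hsplit : Ici x = {x} ∪ Ioi x := by
      ext y; simp only [mem_Ici, mem_union, mem_singleton_iff, mem_Ioi]
      constructor
      · intro h; rcases eq_or_lt_of_le h with h | h
        · exact Or.inl h.symm
        · exact Or.inr h
      · rintro (rfl | h); exacts [le_refl _, le_of_lt h]
    rw [hsplit] at hx
    rcases Ultrafilter.union_mem_iff.mp hx with h | h
    · exact absurd h (hnp x)
    · exact h
  have hBIio : ∀ x : X, Ici x ∉ U → Iio x ∈ U := by
    intro x hx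
    rw [← Set.compl_Ici]
    exact Ultrafilter.compl_mem_iff_notMem.mpr hx
  have hBiff : ∀ x : X, Ici x ∉ U ↔ m < x := by
    intro x
    constructor
    · intro hx
      by_contra h
      exact hx (U.mem_of_superset hm (Ici_subset_Ici.mpr (not_lt.mp h)))
    · intro h hx
      exact absurd (hmax x hx) (not_le.mpr h)
  have hIoomem : ∀ b : X, m < b → Ioo m b ∈ U := by
    intro b hb
    rw [show Ioo m b = Ioi m ∩ Iio b from rfl]
    exact Filter.inter_mem (hIoi m hm) (hBIio b ((hBiff b).mpr hb))
  have hcoin : ∀ b : X, m < b → ∃ s ∈ S, m < s ∧ s < b := by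
    intro b hb
    have hne : (Ioo m b).Nonempty := Ultrafilter.nonempty_of_mem (hIoomem b hb)
    obtain ⟨s, hsS, hs⟩ := hS.exists_mem_open
      (by rw [← Set.Ioi_inter_Iio]; exact (hIoiOpen m).inter (hIioOpen b)) hne
    exact ⟨s, hsS, hs.1, hs.2⟩
  rw [Filter.le_def]
  intro V hV
  obtain ⟨W, hWV, hWopen, hmW⟩ := mem_nhds_iff.mp hV
  obtain ⟨t, ht, hmt, htW⟩ := hB.exists_subset_of_mem_open hmW hWopen
  rw [Ultrafilter.mem_coe]
  refine U.mem_of_superset ?_ (subset_trans htW hWV)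
  -- show t ∈ U
  by_cases hgood : ∃ b, m < b ∧ Ioo m b ⊆ t
  · obtain ⟨b, hb, hsub⟩ := hgood
    exact U.mem_of_superset (hIoomem b hb) hsub
  · exfalso
    push_neg at hgood
    have ht_le : ∀ y ∈ t, y ≤ m := by
      intro y hy
      by_contra h
      push_neg at h
      obtain ⟨x, hx, hxt⟩ := not_subset.mp (hgood y h)
      exact hxt ((hconv t ht).out hmt hy ⟨le_of_lt hx.1, le_of_lt hx.2⟩)
    set B₀ : Set X := S ∩ Ioi m with hB₀
    have hB₀card : #B₀ ≤ lam := le_trans (mk_le_mk_of_subset inter_subset_left) hScard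
    set 𝒰 : Set (Set X) := insert (Iio m ∪ t) ((fun s => Ioi s) '' B₀) with h𝒰
    have hcover : ⋃₀ 𝒰 = Set.univ := by
      ext x
      simp only [Set.mem_sUnion, Set.mem_univ, iff_true]
      by_cases hx : x ≤ m
      · refine ⟨Iio m ∪ t, Set.mem_insert _ _, ?_⟩
        rcases lt_or_eq_of_le hx with h | h
        · exact Or.inl h
        · exact Or.inr (h ▸ hmt)
      · push_neg at hx
        obtain ⟨s, hsS, hms, hsx⟩ := hcoin x hx
        exact ⟨Ioi s, Set.mem_insert_iff.mpr (Or.inr ⟨s, ⟨hsS, hms⟩, rfl⟩), hsx⟩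
    have hopen : ∀ u ∈ 𝒰, IsOpen u := by
      rintro u hu
      rcases Set.mem_insert_iff.mp hu with rfl | ⟨s, _, rfl⟩
      · exact (hIioOpen m).union (hB.isOpen ht)
      · exact hIoiOpen s
    have hcard : #𝒰 ≤ lam := by
      refine le_trans mk_insert_le ?_
      have h1 : #((fun s => Ioi s) '' B₀) ≤ lam := le_trans mk_image_le hB₀card
      calc #((fun s => Ioi s) '' B₀) + 1 ≤ lam + lam :=
            add_le_add h1 (le_trans one_le_aleph0 hlam)
        _ = lam := Cardinal.add_eq_self hlam
    obtain ⟨𝒱, h𝒱sub, h𝒱fin, h𝒱cover⟩ := hIC 𝒰 hopen hcover hcard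
    set T : Set X := B₀ ∩ Ioi ⁻¹' 𝒱 with hT
    have hTfin : T.Finite :=
      Set.Finite.subset (Set.Finite.preimage (Set.Ioi_injective.injOn) h𝒱fin) inter_subset_right
    have hmem𝒱 : ∀ z : X, m < z → z ∈ ⋃₀ 𝒱 → ∃ s ∈ T, s < z := by
      intro z hz hzU
      obtain ⟨v, hv, hzv⟩ := hzU
      rcases Set.mem_insert_iff.mp (h𝒱sub hv) with rfl | ⟨s, hs, rfl⟩
      · rcases hzv with h | h
        · exact absurd h (not_lt.mpr (le_of_lt hz))
        · exact absurd (ht_le z h) (not_le.mpr hz)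
      · exact ⟨s, ⟨hs, hv⟩, hzv⟩
    obtain ⟨b₁, hb₁⟩ : ∃ b, m < b := by
      obtain ⟨b, hb⟩ := Ultrafilter.nonempty_of_mem (hIoi m hm)
      exact ⟨b, hb⟩
    rcases T.eq_empty_or_nonempty with hTe | hTne
    · obtain ⟨s, _, hms, _⟩ := hcoin b₁ hb₁
      obtain ⟨s', hs', _⟩ := hmem𝒱 s hms (h𝒱cover ▸ Set.mem_univ s)
      exact absurd hs' (hTe ▸ Set.notMem_empty s')
    · obtain ⟨z₀, hz₀T, hz₀min⟩ := Set.exists_min_image T id hTfin hTne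
      have hz₀m : m < z₀ := hz₀T.1.2
      obtain ⟨s', hs'S, hms', hs'z₀⟩ := hcoin z₀ hz₀m
      obtain ⟨s, hsT, hss'⟩ := hmem𝒱 s' hms' (h𝒱cover ▸ Set.mem_univ s')
      have hzs : z₀ ≤ s := hz₀min s hsT
      exact absurd (lt_trans (lt_of_lt_of_le hs'z₀ hzs) hss') (lt_irrefl s')

end Main

section Dual
variable {X : Type u} [LinearOrder X] [TopologicalSpace X] [T2Space X]

lemma go_left (hGO : ∃ 𝓑 : Set (Set X), IsTopologicalBasis 𝓑 ∧ ∀ s ∈ 𝓑, s.OrdConnected)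
    {lam : Cardinal.{u}} (hlam : ℵ₀ ≤ lam) (hIC : InitiallyCompact X lam)
    {S : Set X} (hS : Dense S) (hScard : #S ≤ lam) (U : Ultrafilter X)
    (hnp : ∀ x : X, {x} ∉ U) (m : X) (hm : Iic m ∈ U)
    (hmin : ∀ a : X, Iic a ∈ U → m ≤ a) :
    (U : Filter X) ≤ 𝓝 m := by
  obtain ⟨𝓑, hB, hconv⟩ := hGO
  haveI : T2Space Xᵒᵈ := ‹T2Space X›
  exact go_right (X := Xᵒᵈ) ⟨𝓑, hB, fun s hs => (hconv s hs).dual⟩ hlam hIC hS hScard U hnp m hm hmin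

end Dual

section ThmA
variable {Y : Type u} [LinearOrder Y] [TopologicalSpace Y] [T2Space Y]

theorem go_compactSpace (hGO : ∃ 𝓑 : Set (Set Y), IsTopologicalBasis 𝓑 ∧ ∀ s ∈ 𝓑, s.OrdConnected)
    {lam : Cardinal.{u}} (hlam : ℵ₀ ≤ lam) (hIC : InitiallyCompact Y lam)
    {S : Set Y} (hS : Dense S) (hScard : #S ≤ lam) : CompactSpace Y := by
  classical
  constructor
  rw [isCompact_iff_ultrafilter_le_nhds]
  intro U _
  suffices h : ∃ x, (U : Filter Y) ≤ 𝓝 x by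
    obtain ⟨x, hx⟩ := h; exact ⟨x, Set.mem_univ x, hx⟩
  by_cases hp : ∃ x : Y, {x} ∈ U
  · obtain ⟨x, hx⟩ := hp
    refine ⟨x, fun s hs => ?_⟩
    exact U.mem_of_superset hx (Set.singleton_subset_iff.mpr (mem_of_mem_nhds hs))
  push_neg at hp
  have hIoiOpen : ∀ a : Y, IsOpen (Ioi a) := go_isOpen_Ioi_s14 hGO
  have hIioOpen : ∀ a : Y, IsOpen (Iio a) := go_isOpen_Iio_s14 hGO
  have hIoi : ∀ x : Y, Ici x ∈ U → Ioi x ∈ U := by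
    intro x hx
    have hsplit : Ici x = {x} ∪ Ioi x := by
      ext y; simp only [Set.mem_Ici, Set.mem_union, Set.mem_singleton_iff, Set.mem_Ioi]
      constructor
      · intro h; rcases eq_or_lt_of_le h with h | h
        · exact Or.inl h.symm
        · exact Or.inr h
      · rintro (rfl | h); exacts [le_refl _, le_of_lt h]
    rw [hsplit] at hx
    rcases Ultrafilter.union_mem_iff.mp hx with h | h
    · exact absurd h (hp x)
    · exact h
  have hIio : ∀ x : Y, Iic x ∈ U → Iio x ∈ U := by
    intro x hx
    have hsplit : Iic x = {x} ∪ Iio x := by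
      ext y; simp only [Set.mem_Iic, Set.mem_union, Set.mem_singleton_iff, Set.mem_Iio]
      constructor
      · intro h; rcases eq_or_lt_of_le h with h | h
        · exact Or.inl h
        · exact Or.inr h
      · rintro (rfl | h); exacts [le_refl _, le_of_lt h]
    rw [hsplit] at hx
    rcases Ultrafilter.union_mem_iff.mp hx with h | h
    · exact absurd h (hp x)
    · exact h
  by_cases hmax : ∃ m : Y, Ici m ∈ U ∧ ∀ a : Y, Ici a ∈ U → a ≤ m
  · obtain ⟨m, hm, hmx⟩ := hmax
    exact ⟨m, go_right hGO hlam hIC hS hScard U hp m hm hmx⟩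
  by_cases hmin : ∃ m : Y, Iic m ∈ U ∧ ∀ a : Y, Iic a ∈ U → m ≤ a
  · obtain ⟨m, hm, hmn⟩ := hmin
    exact ⟨m, go_left hGO hlam hIC hS hScard U hp m hm hmn⟩
  exfalso
  push_neg at hmax hmin
  have hBIio : ∀ x : Y, Ici x ∉ U → Iio x ∈ U := by
    intro x hx
    rw [← Set.compl_Ici]
    exact Ultrafilter.compl_mem_iff_notMem.mpr hx
  have hAnotIio : ∀ x : Y, Ici x ∈ U → Iio x ∉ U := by
    intro x hx h
    have h2 : Ioi x ∈ U := hIoi x hx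
    have h3 : Iio x ∩ Ioi x ∈ U := Filter.inter_mem h h2
    obtain ⟨z, hz1, hz2⟩ := Ultrafilter.nonempty_of_mem h3
    exact absurd hz2 (not_lt.mpr (le_of_lt hz1))
  have hAlow : ∀ x y : Y, x ≤ y → Ici y ∈ U → Ici x ∈ U := fun x y hxy hy =>
    U.mem_of_superset hy (Set.Ici_subset_Ici.mpr hxy)
  have hBup : ∀ x y : Y, x ≤ y → Ici x ∉ U → Ici y ∉ U := by
    intro x y hxy hx hy
    exact hx (hAlow x y hxy hy)
  have hA0cof : ∀ a : Y, Ici a ∈ U → ∃ s ∈ S, Ici s ∈ U ∧ a < s := by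
    intro a ha
    obtain ⟨a', ha', haa'⟩ := hmax a ha
    obtain ⟨a'', ha'', ha'a''⟩ := hmax a' ha'
    have hne : (Ioo a a'').Nonempty := ⟨a', haa', ha'a''⟩
    obtain ⟨s, hsS, hs⟩ := hS.exists_mem_open
      (by rw [← Set.Ioi_inter_Iio]; exact (hIoiOpen a).inter (hIioOpen a'')) hne
    exact ⟨s, hsS, hAlow s a'' (le_of_lt hs.2) ha'', hs.1⟩
  have hB0coi : ∀ b : Y, Ici b ∉ U → ∃ s ∈ S, Ici s ∉ U ∧ s < b := by
    intro b hb
    have hstep : ∀ c : Y, Ici c ∉ U → ∃ c' : Y, Ici c' ∉ U ∧ c' < c := by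
      intro c hc
      have hIic : Iic c ∈ U := U.mem_of_superset (hBIio c hc) Set.Iio_subset_Iic_self
      obtain ⟨a, ha, hac⟩ := hmin c hIic
      have hanotA : Ici a ∉ U := by
        intro h
        exact hAnotIio a h (hIio a ha)
      exact ⟨a, hanotA, hac⟩
    obtain ⟨b', hb', hb'b⟩ := hstep b hb
    obtain ⟨b'', hb'', hb''b'⟩ := hstep b' hb'
    have hne : (Ioo b'' b).Nonempty := ⟨b', hb''b', hb'b⟩
    obtain ⟨s, hsS, hs⟩ := hS.exists_mem_open
      (by rw [← Set.Ioi_inter_Iio]; exact (hIoiOpen b'').inter (hIioOpen b)) hne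
    exact ⟨s, hsS, hBup b'' s (le_of_lt hs.1) hb'', hs.2⟩
  have hIccClosed : ∀ a b : Y, IsClosed (Icc a b) := by
    intro a b
    have h : Icc a b = (Iio a ∪ Ioi b)ᶜ := by
      ext x; simp [not_or, not_lt, and_comm]
    rw [h]
    exact ((hIioOpen a).union (hIoiOpen b)).isClosed_compl
  have hIicClosed : ∀ b : Y, IsClosed (Iic b) := by
    intro b
    have h : Iic b = (Ioi b)ᶜ := by ext x; simp [not_lt]
    rw [h]; exact (hIoiOpen b).isClosed_compl
  have hIciClosed : ∀ a : Y, IsClosed (Ici a) := by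
    intro a
    have h : Ici a = (Iio a)ᶜ := by ext x; simp [not_lt]
    rw [h]; exact (hIioOpen a).isClosed_compl
  set A₀ : Set Y := {s ∈ S | Ici s ∈ U} with hA₀def
  set B₀ : Set Y := {s ∈ S | Ici s ∉ U} with hB₀def
  have hA₀card : #A₀ ≤ lam := le_trans (mk_le_mk_of_subset (fun x hx => hx.1)) hScard
  have hB₀card : #B₀ ≤ lam := le_trans (mk_le_mk_of_subset (fun x hx => hx.1)) hScard
  rcases eq_or_ne A₀ ∅ with hA₀e | hA₀ne
  · have hAe : ∀ x : Y, Ici x ∉ U := by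
      intro x hx
      obtain ⟨s, hsS, hsU, _⟩ := hA0cof x hx
      exact absurd (show s ∈ A₀ from ⟨hsS, hsU⟩) (hA₀e ▸ Set.notMem_empty s)
    have hB₀ne : B₀.Nonempty := by
      obtain ⟨y⟩ : Nonempty Y := Filter.nonempty_of_neBot (U : Filter Y)
      obtain ⟨s, hsS, hsU, _⟩ := hB0coi y (hAe y)
      exact ⟨s, hsS, hsU⟩
    obtain ⟨q, hq⟩ := cluster_of_small hIC (Iio '' B₀)
      (le_trans mk_image_le hB₀card) (hB₀ne.image _)
      (by
        rintro M ⟨b, hb, rfl⟩ N ⟨b', hb', rfl⟩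
        refine ⟨Iio (min b b'), ⟨min b b', ?_, rfl⟩, ?_⟩
        · rcases min_choice b b' with h | h
          · rw [h]; exact hb
          · rw [h]; exact hb'
        · intro x hx; exact ⟨lt_of_lt_of_le hx (min_le_left _ _),
            lt_of_lt_of_le hx (min_le_right _ _)⟩)
      (by rintro M ⟨b, hb, rfl⟩; exact Ultrafilter.nonempty_of_mem (hBIio b hb.2))
    obtain ⟨s, hsS, hsU, hsq⟩ := hB0coi q (hAe q)
    have h1 : q ∈ closure (Iio s) := hq _ ⟨s, ⟨hsS, hsU⟩, rfl⟩
    have h2 : q ≤ s :=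
      (hIicClosed s).closure_subset_iff.mpr Set.Iio_subset_Iic_self h1
    exact absurd (lt_of_le_of_lt h2 hsq) (lt_irrefl q)
  · rcases eq_or_ne B₀ ∅ with hB₀e | hB₀ne
    · have hBe : ∀ x : Y, Ici x ∈ U := by
        intro x
        by_contra hx
        obtain ⟨s, hsS, hsU, _⟩ := hB0coi x hx
        exact absurd (show s ∈ B₀ from ⟨hsS, hsU⟩) (hB₀e ▸ Set.notMem_empty s)
      obtain ⟨q, hq⟩ := cluster_of_small hIC (Ioi '' A₀)
        (le_trans mk_image_le hA₀card)
        ((Set.nonempty_iff_ne_empty.mpr hA₀ne).image _)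
        (by
          rintro M ⟨a, ha, rfl⟩ N ⟨a', ha', rfl⟩
          refine ⟨Ioi (max a a'), ⟨max a a', ?_, rfl⟩, ?_⟩
          · rcases max_choice a a' with h | h
            · rw [h]; exact ha
            · rw [h]; exact ha'
          · intro x hx; exact ⟨lt_of_le_of_lt (le_max_left _ _) hx,
              lt_of_le_of_lt (le_max_right _ _) hx⟩)
        (by rintro M ⟨a, ha, rfl⟩; exact Ultrafilter.nonempty_of_mem (hIoi a ha.2))
      obtain ⟨s, hsS, hsU, hqs⟩ := hA0cof q (hBe q)
      have h1 : q ∈ closure (Ioi s) := hq _ ⟨s, ⟨hsS, hsU⟩, rfl⟩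
      have h2 : s ≤ q := (hIciClosed s).closure_subset_iff.mpr Set.Ioi_subset_Ici_self h1
      exact absurd (lt_of_le_of_lt h2 hqs) (lt_irrefl s)
    · have hmemU : ∀ a ∈ A₀, ∀ b ∈ B₀, Ioo a b ∈ U := by
        intro a ha b hb
        rw [← Set.Ioi_inter_Iio]
        exact Filter.inter_mem (hIoi a ha.2) (hBIio b hb.2)
      obtain ⟨q, hq⟩ := cluster_of_small hIC (Set.image2 Ioo A₀ B₀)
        (le_trans mk_image2_le (le_trans (mul_le_mul' hA₀card hB₀card)
          (le_of_eq (Cardinal.mul_eq_self hlam))))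
        ((Set.nonempty_iff_ne_empty.mpr hA₀ne).image2 (Set.nonempty_iff_ne_empty.mpr hB₀ne))
        (by
          rintro M ⟨a, ha, b, hb, rfl⟩ N ⟨a', ha', b', hb', rfl⟩
          have hmaxA : max a a' ∈ A₀ := by
            rcases max_choice a a' with h | h
            · rw [h]; exact ha
            · rw [h]; exact ha'
          have hminB : min b b' ∈ B₀ := by
            rcases min_choice b b' with h | h
            · rw [h]; exact hb
            · rw [h]; exact hb'
          refine ⟨Ioo (max a a') (min b b'), Set.mem_image2_of_mem hmaxA hminB, ?_⟩
          intro x hx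
          exact ⟨⟨lt_of_le_of_lt (le_max_left _ _) hx.1, lt_of_lt_of_le hx.2 (min_le_left _ _)⟩,
            ⟨lt_of_le_of_lt (le_max_right _ _) hx.1, lt_of_lt_of_le hx.2 (min_le_right _ _)⟩⟩)
        (by
          rintro M ⟨a, ha, b, hb, rfl⟩
          exact Ultrafilter.nonempty_of_mem (hmemU a ha b hb))
      obtain ⟨b₁, hb₁⟩ := Set.nonempty_iff_ne_empty.mpr hB₀ne
      obtain ⟨a₁, ha₁⟩ := Set.nonempty_iff_ne_empty.mpr hA₀ne
      have hqIcc : ∀ a ∈ A₀, ∀ b ∈ B₀, q ∈ Icc a b := by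
        intro a ha b hb
        have h1 : q ∈ closure (Ioo a b) := hq _ (Set.mem_image2_of_mem ha hb)
        exact (hIccClosed a b).closure_subset_iff.mpr Set.Ioo_subset_Icc_self h1
      by_cases hqA : Ici q ∈ U
      · obtain ⟨s, hsS, hsU, hqs⟩ := hA0cof q hqA
        have h2 : s ≤ q := (hqIcc s ⟨hsS, hsU⟩ b₁ hb₁).1
        exact absurd (lt_of_le_of_lt h2 hqs) (lt_irrefl s)
      · obtain ⟨s, hsS, hsU, hsq⟩ := hB0coi q hqA
        have h2 : q ≤ s := (hqIcc a₁ ha₁ s ⟨hsS, hsU⟩).2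
        exact absurd (lt_of_le_of_lt h2 hsq) (lt_irrefl q)

end ThmA

section Transfer
variable {X : Type u} [TopologicalSpace X]

lemma initiallyCompact_subtype {lam : Cardinal.{u}} (hlam : ℵ₀ ≤ lam)
    (hIC : InitiallyCompact X lam) (C : Set X) (hC : IsClosed C) :
    InitiallyCompact (↥C) lam := by
  classical
  intro 𝒰' hopen' hcover' hcard'
  have hchoice : ∀ u ∈ 𝒰', ∃ V : Set X, IsOpen V ∧ Subtype.val ⁻¹' V = u := by
    intro u hu
    obtain ⟨V, hV, hVu⟩ := isOpen_induced_iff.mp (hopen' u hu)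
    exact ⟨V, hV, hVu⟩
  choose! g hg1 hg2 using hchoice
  set 𝒰 : Set (Set X) := insert Cᶜ (g '' 𝒰') with h𝒰
  have hopen : ∀ u ∈ 𝒰, IsOpen u := by
    rintro u hu
    rcases Set.mem_insert_iff.mp hu with rfl | ⟨u', hu', rfl⟩
    · exact hC.isOpen_compl
    · exact hg1 u' hu'
  have hcover : ⋃₀ 𝒰 = Set.univ := by
    ext x
    simp only [Set.mem_sUnion, Set.mem_univ, iff_true]
    by_cases hx : x ∈ C
    · have : (⟨x, hx⟩ : ↥C) ∈ ⋃₀ 𝒰' := hcover' ▸ Set.mem_univ _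
      obtain ⟨u', hu', hxu'⟩ := this
      refine ⟨g u', Set.mem_insert_iff.mpr (Or.inr ⟨u', hu', rfl⟩), ?_⟩
      rw [← hg2 u' hu'] at hxu'
      exact hxu'
    · exact ⟨Cᶜ, Set.mem_insert _ _, hx⟩
  have hcard : #𝒰 ≤ lam := by
    refine le_trans mk_insert_le ?_
    calc #(g '' 𝒰') + 1 ≤ lam + lam :=
          add_le_add (le_trans mk_image_le hcard') (le_trans one_le_aleph0 hlam)
      _ = lam := Cardinal.add_eq_self hlam
  obtain ⟨𝒱, h𝒱sub, h𝒱fin, h𝒱cover⟩ := hIC 𝒰 hopen hcover hcard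
  have hback : ∀ v ∈ 𝒱 ∩ (g '' 𝒰'), ∃ u ∈ 𝒰', g u = v := by
    rintro v ⟨_, u, hu, rfl⟩
    exact ⟨u, hu, rfl⟩
  choose! h hh1 hh2 using hback
  refine ⟨h '' (𝒱 ∩ (g '' 𝒰')), ?_, (h𝒱fin.inter_of_left _).image h, ?_⟩
  · rintro u ⟨v, hv, rfl⟩
    exact hh1 v hv
  · ext y
    simp only [Set.mem_sUnion, Set.mem_univ, iff_true]
    have : (y : X) ∈ ⋃₀ 𝒱 := h𝒱cover ▸ Set.mem_univ _
    obtain ⟨v, hv, hyv⟩ := this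
    rcases Set.mem_insert_iff.mp (h𝒱sub hv) with rfl | hvim
    · exact absurd y.2 hyv
    · have hv' : v ∈ 𝒱 ∩ (g '' 𝒰') := ⟨hv, hvim⟩
      refine ⟨h v, ⟨v, hv', rfl⟩, ?_⟩
      have : Subtype.val ⁻¹' (g (h v)) = h v := hg2 (h v) (hh1 v hv')
      rw [← this]
      show (y : X) ∈ g (h v)
      rw [hh2 v hv']
      exact hyv

end Transfer

section Easy
variable {X : Type u} [TopologicalSpace X]

lemma bounded_implies_ic {lam : Cardinal.{u}} (hlam : ℵ₀ ≤ lam)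
    (hb : ∀ S : Set X, #S ≤ lam → IsCompact (closure S)) :
    InitiallyCompact X lam := by
  classical
  intro 𝒰 hopen hcover hcard
  by_contra hno
  push_neg at hno
  have hpt : ∀ l : List ↥𝒰, ∃ x : X, x ∉ ⋃₀ (Subtype.val '' {u : ↥𝒰 | u ∈ l}) := by
    intro l
    have hfin : (Subtype.val '' {u : ↥𝒰 | u ∈ l}).Finite := (l.finite_toSet).image _
    have hsub : Subtype.val '' {u : ↥𝒰 | u ∈ l} ⊆ 𝒰 := by
      rintro u ⟨u', _, rfl⟩; exact u'.2
    have := hno _ hsub hfin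
    rw [← Set.ne_univ_iff_exists_notMem]
    exact this
  choose f hf using hpt
  have hScard : #(Set.range f) ≤ lam := by
    refine le_trans Cardinal.mk_range_le ?_
    refine le_trans (Cardinal.mk_list_le_max _) ?_
    exact max_le hlam hcard
  have hK := hb (Set.range f) hScard
  have hKcover : closure (Set.range f) ⊆ ⋃ u : ↥𝒰, (u : Set X) := by
    intro x _
    have : x ∈ ⋃₀ 𝒰 := hcover ▸ Set.mem_univ x
    obtain ⟨u, hu, hxu⟩ := this
    exact Set.mem_iUnion.mpr ⟨⟨u, hu⟩, hxu⟩
  obtain ⟨t, ht⟩ := hK.elim_finite_subcover (fun u : ↥𝒰 => (u : Set X))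
    (fun u => hopen u u.2) hKcover
  have hmem : f t.toList ∈ closure (Set.range f) := subset_closure (Set.mem_range_self _)
  have := ht hmem
  obtain ⟨u, hu, hxu⟩ := Set.mem_iUnion₂.mp this
  exact hf t.toList ⟨u, ⟨u, (Finset.mem_toList).mpr hu, rfl⟩, hxu⟩

end Easy


/-- A GO space is initially `lam`-compact iff it is `lam`-bounded: every subset of
cardinality at most `lam` has compact closure. -/
theorem stmt14 (lam : Cardinal.{u}) (hlam : ℵ₀ ≤ lam)
    (X : Type u) [LinearOrder X] [TopologicalSpace X] [T2Space X]
    (hGO : ∃ 𝓑 : Set (Set X), IsTopologicalBasis 𝓑 ∧ ∀ s ∈ 𝓑, s.OrdConnected) :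
    InitiallyCompact X lam ↔ ∀ S : Set X, #S ≤ lam → IsCompact (closure S) := by
  constructor
  · intro hIC S hScard
    obtain ⟨𝓑, hB, hconv⟩ := hGO
    rw [isCompact_iff_compactSpace]
    set C : Set X := closure S with hC
    have hGOC : ∃ 𝓑' : Set (Set ↥C), IsTopologicalBasis 𝓑' ∧ ∀ s ∈ 𝓑', s.OrdConnected := by
      refine ⟨(Set.preimage (Subtype.val : ↥C → X)) '' 𝓑, hB.isInducing Topology.IsInducing.subtypeVal, ?_⟩
      rintro s ⟨t, ht, rfl⟩
      constructor
      intro x hx y hy z hz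
      exact (hconv t ht).out hx hy ⟨Subtype.coe_le_coe.mpr hz.1, Subtype.coe_le_coe.mpr hz.2⟩
    have hICC : InitiallyCompact (↥C) lam :=
      initiallyCompact_subtype hlam hIC C isClosed_closure
    have hdense : Dense (Subtype.val ⁻¹' S : Set ↥C) := by
      rw [dense_iff_inter_open]
      rintro u hu hune
      obtain ⟨V, hV, rfl⟩ := isOpen_induced_iff.mp hu
      obtain ⟨y, hy⟩ := hune
      have hyC : (y : X) ∈ closure S := y.2
      obtain ⟨s, hsV, hsS⟩ := mem_closure_iff.mp hyC V hV hy
      exact ⟨⟨s, subset_closure hsS⟩, hsV, hsS⟩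
    have hdcard : #(Subtype.val ⁻¹' S : Set ↥C) ≤ lam :=
      le_trans (Cardinal.mk_preimage_of_injective _ _ Subtype.val_injective) hScard
    exact go_compactSpace hGOC hlam hICC hdense hdcard
  · intro hb
    exact bounded_implies_ic hlam hb
end
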